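/- arXiv:1609.05832 — 2 statements merged into one kernel-verified Lean document; each statement's English description precedes it below -/
import Mathlib

section
/- Let φ:(0,∞)×ℝ→ℝ be concave, and define u₁(s₁) = inf_{v≥0}{v − φ(s₁, L(s₁)+v²)}, u₂(s₂) = φ(s₂, L(s₂)), Δ^S(s₁,v) = −∂₁,ᵣφ(s₁, L(s₁)+v²), Δ^L(s₁,v) = −∂₂,ᵣφ(s₁, L(s₁)+v²), where ∂ᵢ,ᵣφ denotes the right partial derivative in the i-th argument. Then for all s₁,s₂>0 and v≥0: u₁(s₁)+u₂(s₂)+Δ^S(s₁,v)(s₂−s₁)+Δ^L(s₁,v)(L(s₂/s₁)−v²) ≤ v. -/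
open MeasureTheory Set Filter

noncomputable section

/-- The log-contract payoff `L(x) = -(2/τ) ln x`. -/
def Lf (τ x : ℝ) : ℝ := -(2 / τ) * Real.log x

/-- 1-dimensional supergradient inequality for a concave function via its right
derivative. -/
lemma concave_le_of_rightDeriv {A : Set ℝ} {g : ℝ → ℝ} (hg : ConcaveOn ℝ A g)
    {x₀ d : ℝ} (hx₀ : x₀ ∈ A) (hA1 : x₀ + 1 ∈ A)
    (hd : HasDerivWithinAt g d (Set.Ioi x₀) x₀) {x₁ : ℝ} (hx₁ : x₁ ∈ A) :
    g x₁ ≤ g x₀ + d * (x₁ - x₀) := by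
  rcases lt_trichotomy x₁ x₀ with h | h | h
  · -- x₁ < x₀ : slope from the left is ≥ right derivative
    have htend : Filter.Tendsto (slope g x₀) (nhdsWithin x₀ (Set.Ioi x₀)) (nhds d) :=
      (hasDerivWithinAt_iff_tendsto_slope' notMem_Ioi_self).mp hd
    have hanti := hg.slope_anti hx₀
    have hmem₁ : x₁ ∈ A \ {x₀} := ⟨hx₁, by simp [h.ne]⟩
    have hle : d ≤ slope g x₀ x₁ := by
      refine le_of_tendsto htend ?_
      filter_upwards [Ioo_mem_nhdsGT_of_mem (Set.mem_Ico.mpr ⟨le_refl x₀, lt_add_one x₀⟩)]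
        with t ht
      have htA : t ∈ A := hg.1.ordConnected.out hx₀ hA1 ⟨ht.1.le, ht.2.le⟩
      exact hanti hmem₁ ⟨htA, by simp [ht.1.ne']⟩ (h.le.trans ht.1.le)
    rw [slope_def_field] at hle
    have hx : x₁ - x₀ < 0 := by linarith
    have := (le_div_iff_of_neg hx).mp hle
    linarith
  · simp [h]
  · -- x₀ < x₁ : slope is ≤ right derivative (use convexity of -g)
    have := (hg.neg.le_slope_of_hasDerivWithinAt_Ioi hx₀ hx₁ h hd.neg)
    rw [slope_def_field] at this
    have hx : 0 < x₁ - x₀ := by linarith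
    rw [le_div_iff₀ hx] at this
    simp only [Pi.neg_apply] at this
    nlinarith [this]

/-- Existence of the right derivative of a concave function at a point with
room on both sides. -/
lemma concave_exists_rightDeriv {A : Set ℝ} {g : ℝ → ℝ} (hg : ConcaveOn ℝ A g)
    {x₀ z : ℝ} (hx₀ : x₀ ∈ A) (hz : z ∈ A) (hzx : z < x₀) (hA1 : x₀ + 1 ∈ A) :
    ∃ d, HasDerivWithinAt g d (Set.Ioi x₀) x₀ := by
  have hanti := hg.slope_anti hx₀
  have hsub : Set.Ioo x₀ (x₀ + 1) ⊆ A \ {x₀} := fun t ht =>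
    ⟨hg.1.ordConnected.out hx₀ hA1 ⟨ht.1.le, ht.2.le⟩, by simp [ht.1.ne']⟩
  have hne : (Set.Ioo x₀ (x₀ + 1)).Nonempty := ⟨x₀ + 1 / 2, by constructor <;> norm_num⟩
  have hAf : AntitoneOn (slope g x₀) (Set.Ioo x₀ (x₀ + 1)) := hanti.mono hsub
  have hbdd : BddAbove (slope g x₀ '' Set.Ioo x₀ (x₀ + 1)) := by
    refine ⟨slope g x₀ z, ?_⟩
    rintro y ⟨t, ht, rfl⟩
    exact hanti ⟨hz, by simp [hzx.ne]⟩ (hsub ht) (hzx.le.trans ht.1.le)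
  exact ⟨sSup (slope g x₀ '' Set.Ioo x₀ (x₀ + 1)),
    (hasDerivWithinAt_iff_tendsto_slope' notMem_Ioi_self).mpr
      (hAf.tendsto_nhdsWithin_Ioo_right hne hbdd)⟩

/-- Horizontal slice of a concave function of two variables is concave. -/
lemma concave_slice1 {A B : Set ℝ} {φ : ℝ × ℝ → ℝ}
    (hφ : ConcaveOn ℝ (A ×ˢ B) φ) (hA : Convex ℝ A) {y₀ : ℝ} (hy₀ : y₀ ∈ B) :
    ConcaveOn ℝ A (fun t => φ (t, y₀)) := by
  refine ⟨hA, fun x hx y hy a b ha hb hab => ?_⟩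
  have key := hφ.2 (Set.mk_mem_prod hx hy₀) (Set.mk_mem_prod hy hy₀) ha hb hab
  have hpt : a • ((x : ℝ), y₀) + b • ((y : ℝ), y₀) = (a • x + b • y, y₀) := by
    ext
    · rfl
    · simp only [Prod.snd_add, Prod.smul_snd, smul_eq_mul]
      linear_combination y₀ * hab
  rwa [hpt] at key

/-- Swapping coordinates preserves concavity. -/
lemma concave_swap {A B : Set ℝ} {φ : ℝ × ℝ → ℝ}
    (hφ : ConcaveOn ℝ (A ×ˢ B) φ) (hA : Convex ℝ A) (hB : Convex ℝ B) :
    ConcaveOn ℝ (B ×ˢ A) (fun u => φ (u.2, u.1)) := by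
  refine ⟨hB.prod hA, fun u hu w hw a b ha hb hab => ?_⟩
  have key := hφ.2 (Set.mk_mem_prod hu.2 hu.1) (Set.mk_mem_prod hw.2 hw.1) ha hb hab
  have hpt : a • ((u.2 : ℝ), u.1) + b • ((w.2 : ℝ), w.1)
      = ((a • u + b • w).2, (a • u + b • w).1) := rfl
  rwa [hpt] at key

/-- Key two-dimensional supergradient-type inequality for a concave function,
using right partial derivatives, valid when the second coordinate moves
down (or stays). -/
lemma concave_two_dim {A B : Set ℝ} {φ : ℝ × ℝ → ℝ}
    (hφ : ConcaveOn ℝ (A ×ˢ B) φ) (hA : Convex ℝ A) (hB : Convex ℝ B)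
    {x₀ y₀ x₁ y₁ d₁ d₂ : ℝ} (hx₀ : x₀ ∈ A) (hy₀ : y₀ ∈ B) (hx₁ : x₁ ∈ A)
    (hy₁ : y₁ ∈ B) (hA1 : x₀ + 1 ∈ A) (hB1 : y₀ + 1 ∈ B) (hy : y₁ ≤ y₀)
    (hd₁ : HasDerivWithinAt (fun t => φ (t, y₀)) d₁ (Set.Ioi x₀) x₀)
    (hd₂ : HasDerivWithinAt (fun t => φ (x₀, t)) d₂ (Set.Ioi y₀) y₀) :
    φ (x₁, y₁) ≤ φ (x₀, y₀) + d₁ * (x₁ - x₀) + d₂ * (y₁ - y₀) := by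
  set a : ℝ := x₁ - x₀ with ha_def
  set b : ℝ := y₁ - y₀ with hb_def
  have hg₁ : ConcaveOn ℝ A (fun t => φ (t, y₀)) := concave_slice1 hφ hA hy₀
  -- the key pointwise bound for every t slightly above y₀
  have key : ∀ t ∈ Set.Ioo y₀ (y₀ + 1),
      φ (x₁, y₁) ≤ φ (x₀, y₀) + d₁ * a + (slope (fun s => φ (x₀, s)) y₀ t) * b := by
    intro t ht
    have htB : t ∈ B := hB.ordConnected.out hy₀ hB1 ⟨ht.1.le, ht.2.le⟩
    have hty₁ : y₁ < t := lt_of_le_of_lt hy ht.1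
    have hden : (0 : ℝ) < t - y₁ := by linarith
    set θ : ℝ := (y₀ - y₁) / (t - y₁) with hθ_def
    set lam : ℝ := (t - y₀) / (t - y₁) with hlam_def
    have hθ0 : 0 ≤ θ := div_nonneg (by linarith) hden.le
    have hlam0 : 0 < lam := div_pos (by linarith [ht.1]) hden
    have hsum : θ + lam = 1 := by
      rw [hθ_def, hlam_def, ← add_div, div_eq_iff hden.ne']; ring
    have hconc := hφ.2 (Set.mk_mem_prod hx₀ htB) (Set.mk_mem_prod hx₁ hy₁)
      hθ0 hlam0.le hsum
    have hpt : θ • ((x₀ : ℝ), t) + lam • ((x₁ : ℝ), y₁) = (x₀ + lam * a, y₀) := by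
      ext
      · simp only [Prod.fst_add, Prod.smul_fst, smul_eq_mul]
        linear_combination x₀ * hsum
      · simp only [Prod.snd_add, Prod.smul_snd, smul_eq_mul]
        rw [hθ_def, hlam_def, div_mul_eq_mul_div, div_mul_eq_mul_div, ← add_div,
          div_eq_iff hden.ne']
        ring
    rw [hpt] at hconc
    -- point x₀ + lam * a is in A
    have hmemA : x₀ + lam * a ∈ A := by
      have := hA hx₀ hx₁ hθ0 hlam0.le hsum
      simpa only [smul_eq_mul, ha_def, show θ * x₀ + lam * x₁ = x₀ + lam * (x₁ - x₀) by
        linear_combination x₀ * hsum] using this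
    have hone := concave_le_of_rightDeriv hg₁ hx₀ hA1 hd₁ hmemA
    simp only [add_sub_cancel_left] at hone
    -- slope identity
    set S : ℝ := slope (fun s => φ (x₀, s)) y₀ t with hS_def
    have hty0 : t - y₀ ≠ 0 := by have := ht.1; intro hc; linarith [ht.1]
    have hslope : (t - y₀) * S = φ (x₀, t) - φ (x₀, y₀) := by
      rw [hS_def, slope_def_field]
      field_simp
    have h1 : θ * (t - y₀) = -(lam * b) := by
      rw [hθ_def, hlam_def, hb_def]
      ring
    -- combine
    have h2 : θ * φ (x₀, t) = θ * φ (x₀, y₀) + (-(lam * b)) * S := by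
      linear_combination S * h1 - θ * hslope
    have h3 : φ (x₀, y₀) - θ * φ (x₀, y₀) = lam * φ (x₀, y₀) := by
      linear_combination (-(φ (x₀, y₀))) * hsum
    have h4 : lam * (φ (x₀, y₀) + d₁ * a + S * b)
        = lam * φ (x₀, y₀) + d₁ * (lam * a) + lam * b * S := by ring
    simp only [smul_eq_mul] at hconc
    rw [← mul_le_mul_iff_right₀ hlam0]
    rw [h4]
    nlinarith [hconc, hone, h2, h3]
  -- pass to the limit t → y₀⁺
  have htendS : Filter.Tendsto (slope (fun s => φ (x₀, s)) y₀)
      (nhdsWithin y₀ (Set.Ioi y₀)) (nhds d₂) :=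
    (hasDerivWithinAt_iff_tendsto_slope' notMem_Ioi_self).mp hd₂
  have htend : Filter.Tendsto
      (fun t => φ (x₀, y₀) + d₁ * a + (slope (fun s => φ (x₀, s)) y₀ t) * b)
      (nhdsWithin y₀ (Set.Ioi y₀)) (nhds (φ (x₀, y₀) + d₁ * a + d₂ * b)) :=
    Filter.Tendsto.const_add _ (htendS.mul_const b)
  refine ge_of_tendsto htend ?_
  filter_upwards [Ioo_mem_nhdsGT_of_mem (Set.mem_Ico.mpr ⟨le_refl y₀, lt_add_one y₀⟩)]
    with t ht using key t ht

/-- Subreplication property of functionally generated portfolios: for a concave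
`φ` on `(0,∞) × ℝ`, the portfolio `u₁ = φ*_sub`, `u₂ = φ(·, L(·))`,
`Δ^S = -∂₁,ᵣφ`, `Δ^L = -∂₂,ᵣφ` (right partial derivatives) satisfies the
subreplication constraint; `u₁` is the pointwise infimum, valued in
`ℝ ∪ {-∞}` (modelled in `EReal`). -/
theorem functionally_generated_subrep (τ : ℝ) (hτ : 0 < τ)
    (φ : ℝ × ℝ → ℝ) (hφ : ConcaveOn ℝ (Set.Ioi 0 ×ˢ (Set.univ : Set ℝ)) φ) :
    ∀ s₁ s₂ v : ℝ, 0 < s₁ → 0 < s₂ → 0 ≤ v →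
      (⨅ w : Set.Ici (0 : ℝ), (((w : ℝ) - φ (s₁, Lf τ s₁ + (w : ℝ) ^ 2) : ℝ) : EReal))
        + ((φ (s₂, Lf τ s₂)
            + (-(derivWithin (fun t => φ (t, Lf τ s₁ + v ^ 2)) (Set.Ioi s₁) s₁))
                * (s₂ - s₁)
            + (-(derivWithin (fun t => φ (s₁, t)) (Set.Ioi (Lf τ s₁ + v ^ 2))
                  (Lf τ s₁ + v ^ 2)))
                * (Lf τ (s₂ / s₁) - v ^ 2) : ℝ) : EReal)
        ≤ (v : EReal) := by
  intro s₁ s₂ v hs₁ hs₂ hv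
  set y₀ : ℝ := Lf τ s₁ + v ^ 2 with hy₀_def
  set d₁ : ℝ := derivWithin (fun t => φ (t, y₀)) (Set.Ioi s₁) s₁ with hd₁_def
  set d₂ : ℝ := derivWithin (fun t => φ (s₁, t)) (Set.Ioi y₀) y₀ with hd₂_def
  -- slices are concave
  have hg₁ : ConcaveOn ℝ (Set.Ioi 0) (fun t => φ (t, y₀)) :=
    concave_slice1 hφ (convex_Ioi 0) (Set.mem_univ _)
  have hg₂ : ConcaveOn ℝ (Set.univ : Set ℝ) (fun t => φ (s₁, t)) := by
    have := concave_slice1 (concave_swap hφ (convex_Ioi 0) convex_univ)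
      convex_univ (A := Set.univ) (B := Set.Ioi 0) hs₁
    exact this
  -- right derivatives exist
  have hs₁A : s₁ ∈ Set.Ioi (0 : ℝ) := hs₁
  have hs₁A' : s₁ + 1 ∈ Set.Ioi (0 : ℝ) := by simp; linarith
  obtain ⟨e₁, he₁⟩ := concave_exists_rightDeriv hg₁ hs₁A
    (show s₁ / 2 ∈ Set.Ioi (0 : ℝ) by simp; linarith) (by linarith) hs₁A'
  obtain ⟨e₂, he₂⟩ := concave_exists_rightDeriv hg₂ (Set.mem_univ y₀)
    (Set.mem_univ (y₀ - 1)) (by linarith) (Set.mem_univ _)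
  have hde₁ : d₁ = e₁ := by
    rw [hd₁_def]
    exact he₁.derivWithin (uniqueDiffWithinAt_Ioi s₁)
  have hde₂ : d₂ = e₂ := by
    rw [hd₂_def]
    exact he₂.derivWithin (uniqueDiffWithinAt_Ioi y₀)
  have hd₁' : HasDerivWithinAt (fun t => φ (t, y₀)) d₁ (Set.Ioi s₁) s₁ := hde₁ ▸ he₁
  have hd₂' : HasDerivWithinAt (fun t => φ (s₁, t)) d₂ (Set.Ioi y₀) y₀ := hde₂ ▸ he₂
  -- the second coordinate of the target point
  have hLdiv : Lf τ (s₂ / s₁) = Lf τ s₂ - Lf τ s₁ := by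
    rw [Lf, Lf, Lf, Real.log_div hs₂.ne' hs₁.ne']
    ring
  set b : ℝ := Lf τ (s₂ / s₁) - v ^ 2 with hb_def
  have hLs₂ : Lf τ s₂ = y₀ + b := by
    rw [hb_def, hLdiv, hy₀_def]; ring
  -- the key real inequality
  have key : φ (s₂, Lf τ s₂) ≤ φ (s₁, y₀) + d₁ * (s₂ - s₁) + d₂ * b := by
    by_cases hcase : s₂ ≤ s₁
    · -- first coordinate moves down: use the swapped version
      have hswap := concave_swap hφ (convex_Ioi 0) convex_univ
      have := concave_two_dim hswap convex_univ (convex_Ioi 0)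
        (Set.mem_univ y₀) hs₁A (Set.mem_univ (Lf τ s₂)) (Set.mem_Ioi.mpr hs₂)
        (Set.mem_univ _) hs₁A' hcase hd₂' hd₁'
      simp only at this
      rw [hLs₂]
      calc φ (s₂, y₀ + b) ≤ φ (s₁, y₀) + d₂ * (y₀ + b - y₀) + d₁ * (s₂ - s₁) := by
            simpa [hLs₂] using this
        _ = φ (s₁, y₀) + d₁ * (s₂ - s₁) + d₂ * b := by ring
    · -- s₁ < s₂, then b ≤ 0
      push_neg at hcase
      have hb0 : b ≤ 0 := by
        have hlog : 0 ≤ Real.log (s₂ / s₁) :=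
          Real.log_nonneg ((one_le_div hs₁).mpr hcase.le)
        have h2τ : 0 < 2 / τ := by positivity
        have : Lf τ (s₂ / s₁) ≤ 0 := by
          rw [Lf]
          nlinarith
        nlinarith [sq_nonneg v]
      have := concave_two_dim hφ (convex_Ioi 0) convex_univ
        hs₁A (Set.mem_univ y₀) (Set.mem_Ioi.mpr hs₂) (Set.mem_univ (y₀ + b))
        hs₁A' (Set.mem_univ _) (by linarith : y₀ + b ≤ y₀) hd₁' hd₂'
      rw [hLs₂]
      calc φ (s₂, y₀ + b) ≤ φ (s₁, y₀) + d₁ * (s₂ - s₁) + d₂ * (y₀ + b - y₀) := this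
        _ = φ (s₁, y₀) + d₁ * (s₂ - s₁) + d₂ * b := by ring
  -- now the EReal computation
  have hinf : (⨅ w : Set.Ici (0 : ℝ),
      (((w : ℝ) - φ (s₁, Lf τ s₁ + (w : ℝ) ^ 2) : ℝ) : EReal))
      ≤ ((v - φ (s₁, y₀) : ℝ) : EReal) := by
    have := iInf_le (fun w : Set.Ici (0 : ℝ) =>
      (((w : ℝ) - φ (s₁, Lf τ s₁ + (w : ℝ) ^ 2) : ℝ) : EReal)) ⟨v, hv⟩
    simpa [hy₀_def] using this
  refine le_trans (add_le_add_left hinf _) ?_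
  rw [← EReal.coe_add, EReal.coe_le_coe_iff]
  have : -(derivWithin (fun t => φ (t, Lf τ s₁ + v ^ 2)) (Set.Ioi s₁) s₁) = -d₁ := by
    rw [hd₁_def, hy₀_def]
  rw [this]
  have : -(derivWithin (fun t => φ (s₁, t)) (Set.Ioi (Lf τ s₁ + v ^ 2))
      (Lf τ s₁ + v ^ 2)) = -d₂ := by
    rw [hd₂_def, hy₀_def]
  rw [this]
  linarith [key]
end
end

section
/- Assume μ₁ and μ₂ are in convex order, μ₂ has compact support in (0,∞) with s₂ᵈ = min supp(μ₂) and s₂ᵘ = max supp(μ₂), and let s₁ᵈ = min supp(μ₁). Then each of the following conditions implies P_super < σ₁₂: (i) E¹[λ_b(S₁)] < σ₁₂; (ii) L(s₁ᵈ) − ℓ₁ > L(s₂ᵈ) − ℓ₂ (which holds in particular if s₁ᵈ = s₂ᵈ and μ₁ ≠ μ₂); (iii) μ₁(A) > 0, where A = (s₂ᵈ, λ_{b,−}⁻¹(σ₁₂)) ∪ (λ_{b,+}⁻¹(σ₁₂), s₂ᵘ) (in this case σ₁₂ ≤ λ̄_b, so A is well defined). -/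
open MeasureTheory Set Filter

noncomputable section

/-- `μ` is a market smile: a probability measure concentrated on `(0,∞)`
with mean `S₀` and integrable logarithm. -/
structure IsMarginal (S₀ : ℝ) (μ : Measure ℝ) : Prop where
  prob : IsProbabilityMeasure μ
  conc : μ (Set.Ioi (0 : ℝ))ᶜ = 0
  int_id : Integrable (fun s => s) μ
  mean : (∫ s, s ∂μ) = S₀
  int_log : Integrable (fun s => |Real.log s|) μ

/-- A superreplicating portfolio for the VIX future. -/
structure IsSuperRep (τ : ℝ) (μ₁ μ₂ : Measure ℝ) (u₁ u₂ : ℝ → ℝ)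
    (ΔS ΔL : ℝ → ℝ → ℝ) : Prop where
  meas_u₁ : Measurable u₁
  meas_u₂ : Measurable u₂
  meas_ΔS : Measurable (Function.uncurry ΔS)
  meas_ΔL : Measurable (Function.uncurry ΔL)
  int_u₁ : Integrable u₁ μ₁
  int_u₂ : Integrable u₂ μ₂
  hedge : ∀ s₁ s₂ v : ℝ, 0 < s₁ → 0 < s₂ → 0 ≤ v →
    v ≤ u₁ s₁ + u₂ s₂ + ΔS s₁ v * (s₂ - s₁) + ΔL s₁ v * (Lf τ (s₂ / s₁) - v ^ 2)

/-- `P_super`: the infimum of superreplication prices, as an extended real. -/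
def PsuperE (τ : ℝ) (μ₁ μ₂ : Measure ℝ) : EReal :=
  sInf {y : EReal | ∃ u₁ u₂ ΔS ΔL, IsSuperRep τ μ₁ μ₂ u₁ u₂ ΔS ΔL ∧
    y = (((∫ s, u₁ s ∂μ₁) + ∫ s, u₂ s ∂μ₂ : ℝ) : EReal)}

/-- `μ₁` and `μ₂` are in convex order on `(0,∞)`. -/
def ConvexOrder (μ₁ μ₂ : Measure ℝ) : Prop :=
  ∀ f : ℝ → ℝ, ConvexOn ℝ (Set.Ioi 0) f → Integrable f μ₁ → Integrable f μ₂ →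
    (∫ s, f s ∂μ₁) ≤ ∫ s, f s ∂μ₂

/-- The binomial transition probability `π_u`. -/
def piU (s₂d s₂u s : ℝ) : ℝ := (s - s₂d) / (s₂u - s₂d)

/-- The binomial transition probability `π_d`. -/
def piD (s₂d s₂u s : ℝ) : ℝ := (s₂u - s) / (s₂u - s₂d)

/-- `Λ_b(s₁)`: the binomial-model price at `T₁` of the FSLC. -/
def Lb (τ s₂d s₂u s : ℝ) : ℝ :=
  piU s₂d s₂u s * Lf τ (s₂u / s) + piD s₂d s₂u s * Lf τ (s₂d / s)

/-- `λ_b = √Λ_b`. -/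
def lamb (τ s₂d s₂u s : ℝ) : ℝ := Real.sqrt (Lb τ s₂d s₂u s)

/-- `λ̄_b = max_{[s₂d,s₂u]} λ_b`. -/
def lamBar (τ s₂d s₂u : ℝ) : ℝ := sSup (lamb τ s₂d s₂u '' Set.Icc s₂d s₂u)


namespace VIXAux

theorem Lf_div {τ : ℝ} {x y : ℝ} (hx : 0 < x) (hy : 0 < y) :
    Lf τ (x / y) = Lf τ x - Lf τ y := by
  unfold Lf; rw [Real.log_div hx.ne' hy.ne']; ring

/-- The chord of `Lf` between `s₂d` and `s₂u`. -/
def chord (τ s₂d s₂u : ℝ) (s : ℝ) : ℝ :=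
  Lf τ s₂d + (Lf τ s₂u - Lf τ s₂d) / (s₂u - s₂d) * (s - s₂d)

theorem chord_affine {τ s₂d s₂u : ℝ} (s₁ s₂ : ℝ) :
    chord τ s₂d s₂u s₂
      = chord τ s₂d s₂u s₁ + (Lf τ s₂u - Lf τ s₂d) / (s₂u - s₂d) * (s₂ - s₁) := by
  unfold chord; ring

theorem Lb_eq {τ s₂d s₂u : ℝ} (h0 : 0 < s₂d) (hdu : s₂d < s₂u) {s : ℝ} (hs : 0 < s) :
    Lb τ s₂d s₂u s = chord τ s₂d s₂u s - Lf τ s := by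
  have h1 : Lf τ (s₂u / s) = Lf τ s₂u - Lf τ s := Lf_div (h0.trans hdu) hs
  have h2 : Lf τ (s₂d / s) = Lf τ s₂d - Lf τ s := Lf_div h0 hs
  have hne : s₂u - s₂d ≠ 0 := by linarith
  unfold Lb piU piD chord
  rw [h1, h2]; field_simp; ring

theorem Lf_le_chord {τ s₂d s₂u : ℝ} (hτ : 0 < τ) (h0 : 0 < s₂d) (hdu : s₂d < s₂u) {s : ℝ}
    (h₁ : s₂d ≤ s) (h₂ : s ≤ s₂u) : Lf τ s ≤ chord τ s₂d s₂u s := by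
  have hne : (0:ℝ) < s₂u - s₂d := by linarith
  have ha : 0 ≤ (s₂u - s) / (s₂u - s₂d) := div_nonneg (by linarith) hne.le
  have hb : 0 ≤ (s - s₂d) / (s₂u - s₂d) := div_nonneg (by linarith) hne.le
  have hab : (s₂u - s) / (s₂u - s₂d) + (s - s₂d) / (s₂u - s₂d) = 1 := by field_simp; ring
  have hlog := strictConcaveOn_log_Ioi.concaveOn.2 (mem_Ioi.2 h0)
    (mem_Ioi.2 (h0.trans hdu)) ha hb hab
  simp only [smul_eq_mul] at hlog
  have hcomb : (s₂u - s) / (s₂u - s₂d) * s₂d + (s - s₂d) / (s₂u - s₂d) * s₂u = s := by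
    field_simp; ring
  rw [hcomb] at hlog
  have hc : (0:ℝ) < 2 / τ := by positivity
  have key : chord τ s₂d s₂u s
      = -(2 / τ) * ((s₂u - s) / (s₂u - s₂d) * Real.log s₂d
          + (s - s₂d) / (s₂u - s₂d) * Real.log s₂u) := by
    unfold chord Lf; field_simp; ring
  rw [key]
  unfold Lf
  nlinarith [mul_le_mul_of_nonneg_left hlog hc.le]

theorem Lb_nonneg {τ s₂d s₂u : ℝ} (hτ : 0 < τ) (h0 : 0 < s₂d) (hdu : s₂d < s₂u) {s : ℝ}
    (h₁ : s₂d ≤ s) (h₂ : s ≤ s₂u) : 0 ≤ Lb τ s₂d s₂u s := by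
  rw [Lb_eq h0 hdu (h0.trans_le h₁)]
  have := Lf_le_chord hτ h0 hdu h₁ h₂; linarith

theorem measurable_Lf {τ : ℝ} : Measurable (Lf τ) := by
  unfold Lf; exact Real.measurable_log.const_mul _

theorem measurable_Lb {τ s₂d s₂u : ℝ} : Measurable (Lb τ s₂d s₂u) := by
  have h1 : Measurable fun s : ℝ => (s - s₂d) * (s₂u - s₂d)⁻¹ :=
    (measurable_id.sub_const _).mul_const _
  have h2 : Measurable fun s : ℝ => (s₂u - s) * (s₂u - s₂d)⁻¹ :=
    (measurable_const.sub measurable_id).mul_const _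
  have h3 : Measurable fun s : ℝ => -(2 * τ⁻¹) * Real.log (s₂u * s⁻¹) :=
    (Real.measurable_log.comp (measurable_const.mul measurable_inv)).const_mul _
  have h4 : Measurable fun s : ℝ => -(2 * τ⁻¹) * Real.log (s₂d * s⁻¹) :=
    (Real.measurable_log.comp (measurable_const.mul measurable_inv)).const_mul _
  unfold Lb piU piD Lf
  simp only [div_eq_mul_inv]
  exact (h1.mul h3).add (h2.mul h4)

theorem measurable_lamb {τ s₂d s₂u : ℝ} : Measurable (lamb τ s₂d s₂u) := by
  unfold lamb; exact measurable_Lb.sqrt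

theorem ae_pos {S₀ : ℝ} {μ : Measure ℝ} (h : IsMarginal S₀ μ) : ∀ᵐ s ∂μ, 0 < s := by
  rw [ae_iff]
  have hset : {s : ℝ | ¬ 0 < s} = (Set.Ioi (0:ℝ))ᶜ := by ext s; simp
  rw [hset]; exact h.conc

theorem integrable_Lf {S₀ : ℝ} {μ : Measure ℝ} (h : IsMarginal S₀ μ) (τ : ℝ) :
    Integrable (Lf τ) μ := by
  have hlog : Integrable Real.log μ := by
    refine h.int_log.mono' Real.measurable_log.aestronglyMeasurable ?_
    filter_upwards with s
    rw [Real.norm_eq_abs]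
  unfold Lf
  exact hlog.const_mul _

theorem integrable_chord {S₀ : ℝ} {μ : Measure ℝ} (h : IsMarginal S₀ μ) (τ s₂d s₂u : ℝ) :
    Integrable (chord τ s₂d s₂u) μ := by
  haveI := h.prob
  have : chord τ s₂d s₂u = fun s =>
      (Lf τ s₂d - (Lf τ s₂u - Lf τ s₂d) / (s₂u - s₂d) * s₂d)
        + (Lf τ s₂u - Lf τ s₂d) / (s₂u - s₂d) * s := by
    funext s; unfold chord; ring
  rw [this]
  exact (integrable_const _).add (h.int_id.const_mul _)

theorem integral_chord {S₀ : ℝ} {μ : Measure ℝ} (h : IsMarginal S₀ μ) (τ s₂d s₂u : ℝ) :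
    ∫ s, chord τ s₂d s₂u s ∂μ = Lf τ s₂d + (Lf τ s₂u - Lf τ s₂d) / (s₂u - s₂d) * (S₀ - s₂d) := by
  have hrw : chord τ s₂d s₂u = fun s =>
      (Lf τ s₂d - (Lf τ s₂u - Lf τ s₂d) / (s₂u - s₂d) * s₂d)
        + (Lf τ s₂u - Lf τ s₂d) / (s₂u - s₂d) * s := by
    funext s; unfold chord; ring
  haveI := h.prob
  have hmul : ∫ s, (Lf τ s₂u - Lf τ s₂d) / (s₂u - s₂d) * s ∂μ
      = (Lf τ s₂u - Lf τ s₂d) / (s₂u - s₂d) * S₀ := by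
    rw [integral_const_mul, h.mean]
  rw [hrw, integral_add (integrable_const _) (h.int_id.const_mul _), integral_const, hmul,
    probReal_univ]
  simp; ring

theorem integrable_Lb {S₀ : ℝ} {μ : Measure ℝ} (h : IsMarginal S₀ μ) {τ s₂d s₂u : ℝ}
    (h0 : 0 < s₂d) (hdu : s₂d < s₂u) : Integrable (Lb τ s₂d s₂u) μ := by
  refine ((integrable_chord h τ s₂d s₂u).sub (integrable_Lf h τ)).congr ?_
  filter_upwards [ae_pos h] with s hs
  simp only [Pi.sub_apply]
  rw [Lb_eq h0 hdu hs]

theorem integral_Lb {S₀ : ℝ} {μ : Measure ℝ} (h : IsMarginal S₀ μ) {τ s₂d s₂u : ℝ}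
    (h0 : 0 < s₂d) (hdu : s₂d < s₂u) :
    ∫ s, Lb τ s₂d s₂u s ∂μ
      = (Lf τ s₂d + (Lf τ s₂u - Lf τ s₂d) / (s₂u - s₂d) * (S₀ - s₂d)) - ∫ s, Lf τ s ∂μ := by
  rw [← integral_chord h τ s₂d s₂u, ← integral_sub (integrable_chord h τ s₂d s₂u) (integrable_Lf h τ)]
  refine integral_congr_ae ?_
  filter_upwards [ae_pos h] with s hs
  exact Lb_eq h0 hdu hs

theorem Lb_le_sq_lamb {τ s₂d s₂u : ℝ} (s : ℝ) : Lb τ s₂d s₂u s ≤ (lamb τ s₂d s₂u s) ^ 2 := by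
  unfold lamb
  rcases le_or_gt 0 (Lb τ s₂d s₂u s) with h | h
  · rw [Real.sq_sqrt h]
  · exact h.le.trans (by positivity)

theorem lamb_nonneg {τ s₂d s₂u : ℝ} (s : ℝ) : 0 ≤ lamb τ s₂d s₂u s := Real.sqrt_nonneg _

theorem sq_lamb_eq {τ s₂d s₂u : ℝ} (hτ : 0 < τ) (h0 : 0 < s₂d) (hdu : s₂d < s₂u) {s : ℝ}
    (h₁ : s₂d ≤ s) (h₂ : s ≤ s₂u) : (lamb τ s₂d s₂u s) ^ 2 = Lb τ s₂d s₂u s := by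
  unfold lamb; rw [Real.sq_sqrt (Lb_nonneg hτ h0 hdu h₁ h₂)]

theorem integrable_lamb {S₀ : ℝ} {μ : Measure ℝ} (h : IsMarginal S₀ μ) {τ s₂d s₂u : ℝ}
    (h0 : 0 < s₂d) (hdu : s₂d < s₂u) : Integrable (lamb τ s₂d s₂u) μ := by
  haveI := h.prob
  have hint : Integrable (fun s => 1 + |Lb τ s₂d s₂u s|) μ :=
    (integrable_const _).add (integrable_Lb h h0 hdu).abs
  refine hint.mono' measurable_lamb.aestronglyMeasurable ?_
  filter_upwards with s
  rw [Real.norm_eq_abs, abs_of_nonneg (lamb_nonneg s)]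
  unfold lamb
  rcases le_or_gt (Lb τ s₂d s₂u s) 1 with hc | hc
  · have h1 : Real.sqrt (Lb τ s₂d s₂u s) ≤ 1 := Real.sqrt_le_one.mpr hc
    nlinarith [abs_nonneg (Lb τ s₂d s₂u s)]
  · have h1 : Real.sqrt (Lb τ s₂d s₂u s) ≤ Real.sqrt ((Lb τ s₂d s₂u s) ^ 2) :=
      Real.sqrt_le_sqrt (by nlinarith)
    rw [Real.sqrt_sq_eq_abs] at h1
    have := abs_nonneg (Lb τ s₂d s₂u s)
    linarith


theorem convexOn_Lf {τ : ℝ} (hτ : 0 < τ) : ConvexOn ℝ (Ioi 0) (Lf τ) := by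
  have h := (strictConcaveOn_log_Ioi.concaveOn.smul
    (show (0:ℝ) ≤ 2 / τ by positivity)).neg
  refine h.congr fun s _ => ?_
  simp only [Lf, Pi.neg_apply, Pi.smul_apply, smul_eq_mul]; ring

theorem convexOn_call (K : ℝ) : ConvexOn ℝ (Ioi (0:ℝ)) (fun s => max (s - K) 0) := by
  have h1 : ConvexOn ℝ (Ioi (0:ℝ)) (fun s : ℝ => s - K) := by
    refine ⟨convex_Ioi 0, ?_⟩
    intro x _ y _ a b ha hb hab
    simp only [smul_eq_mul]
    have hK : a * K + b * K = K := by rw [← add_mul, hab, one_mul]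
    linarith
  have h2 : ConvexOn ℝ (Ioi (0:ℝ)) (fun _ : ℝ => (0:ℝ)) := convexOn_const 0 (convex_Ioi 0)
  exact (h1.sup h2).congr fun s _ => rfl

theorem convexOn_put (K : ℝ) : ConvexOn ℝ (Ioi (0:ℝ)) (fun s => max (K - s) 0) := by
  have h1 : ConvexOn ℝ (Ioi (0:ℝ)) (fun s : ℝ => K - s) := by
    refine ⟨convex_Ioi 0, ?_⟩
    intro x _ y _ a b ha hb hab
    simp only [smul_eq_mul]
    have hK : a * K + b * K = K := by rw [← add_mul, hab, one_mul]
    linarith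
  have h2 : ConvexOn ℝ (Ioi (0:ℝ)) (fun _ : ℝ => (0:ℝ)) := convexOn_const 0 (convex_Ioi 0)
  exact (h1.sup h2).congr fun s _ => rfl

theorem integrable_call {S₀ : ℝ} {μ : Measure ℝ} (h : IsMarginal S₀ μ) (K : ℝ) :
    Integrable (fun s => max (s - K) 0) μ := by
  haveI := h.prob
  refine ((integrable_const |K|).add h.int_id.abs).mono' ?_ ?_
  · exact ((measurable_id.sub_const K).max measurable_const).aestronglyMeasurable
  · filter_upwards with s
    rw [Real.norm_eq_abs]
    have h1 : |max (s - K) 0| = max (s - K) 0 := abs_of_nonneg (le_max_right _ _)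
    have h2 : max (s - K) 0 ≤ |s - K| := max_le (le_abs_self _) (abs_nonneg _)
    have h3 : |s - K| ≤ |s| + |K| := abs_sub _ _
    simp only [Pi.add_apply]
    linarith

theorem integrable_put {S₀ : ℝ} {μ : Measure ℝ} (h : IsMarginal S₀ μ) (K : ℝ) :
    Integrable (fun s => max (K - s) 0) μ := by
  haveI := h.prob
  refine ((integrable_const |K|).add h.int_id.abs).mono' ?_ ?_
  · exact ((measurable_const.sub measurable_id).max measurable_const).aestronglyMeasurable
  · filter_upwards with s
    rw [Real.norm_eq_abs]
    have h1 : |max (K - s) 0| = max (K - s) 0 := abs_of_nonneg (le_max_right _ _)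
    have h2 : max (K - s) 0 ≤ |K - s| := max_le (le_abs_self _) (abs_nonneg _)
    have h3 : |K - s| ≤ |K| + |s| := abs_sub _ _
    simp only [Pi.add_apply]
    linarith

theorem ae_Icc {S₀ s₂d s₂u : ℝ} {μ : Measure ℝ} (h : IsMarginal S₀ μ)
    (hsupp : μ (Set.Icc s₂d s₂u)ᶜ = 0) : ∀ᵐ s ∂μ, s ∈ Set.Icc s₂d s₂u := by
  rw [ae_iff]
  have hset : {s : ℝ | ¬ s ∈ Set.Icc s₂d s₂u} = (Set.Icc s₂d s₂u)ᶜ := by ext s; simp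
  rw [hset]; exact hsupp

theorem mu1_Iio_null {τ S₀ s₂d s₂u : ℝ} {μ₁ μ₂ : Measure ℝ}
    (h₁ : IsMarginal S₀ μ₁) (h₂ : IsMarginal S₀ μ₂) (hord : ConvexOrder μ₁ μ₂)
    (hsupp₂ : μ₂ (Set.Icc s₂d s₂u)ᶜ = 0) : μ₁ (Set.Iio s₂d) = 0 := by
  set f : ℝ → ℝ := fun s => max (s₂d - s) 0 with hf
  have hle := hord f (convexOn_put s₂d) (integrable_put h₁ s₂d) (integrable_put h₂ s₂d)
  have h2z : ∫ s, f s ∂μ₂ = 0 := by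
    rw [show (0:ℝ) = ∫ _, (0:ℝ) ∂μ₂ by simp]
    refine integral_congr_ae ?_
    filter_upwards [ae_Icc h₂ hsupp₂] with s hs
    exact max_eq_right (by linarith [hs.1])
  have h1nn : 0 ≤ ∫ s, f s ∂μ₁ := integral_nonneg fun s => le_max_right _ _
  have h1z : ∫ s, f s ∂μ₁ = 0 := le_antisymm (by rw [h2z] at hle; exact hle) h1nn
  have hae : f =ᵐ[μ₁] 0 :=
    (integral_eq_zero_iff_of_nonneg (fun s => le_max_right _ _) (integrable_put h₁ s₂d)).mp h1z
  have : μ₁ {s | f s ≠ 0} = 0 := by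
    have := hae; rw [Filter.EventuallyEq, ae_iff] at this
    simpa using this
  refine measure_mono_null ?_ this
  intro s hs
  simp only [mem_setOf_eq, hf]
  have : (0:ℝ) < s₂d - s := by simpa using hs
  have : max (s₂d - s) 0 = s₂d - s := max_eq_left this.le
  rw [this]; exact ne_of_gt ‹(0:ℝ) < s₂d - s›

theorem mu1_Ioi_null {τ S₀ s₂d s₂u : ℝ} {μ₁ μ₂ : Measure ℝ}
    (h₁ : IsMarginal S₀ μ₁) (h₂ : IsMarginal S₀ μ₂) (hord : ConvexOrder μ₁ μ₂)
    (hsupp₂ : μ₂ (Set.Icc s₂d s₂u)ᶜ = 0) : μ₁ (Set.Ioi s₂u) = 0 := by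
  set f : ℝ → ℝ := fun s => max (s - s₂u) 0 with hf
  have hle := hord f (convexOn_call s₂u) (integrable_call h₁ s₂u) (integrable_call h₂ s₂u)
  have h2z : ∫ s, f s ∂μ₂ = 0 := by
    rw [show (0:ℝ) = ∫ _, (0:ℝ) ∂μ₂ by simp]
    refine integral_congr_ae ?_
    filter_upwards [ae_Icc h₂ hsupp₂] with s hs
    exact max_eq_right (by linarith [hs.2])
  have h1nn : 0 ≤ ∫ s, f s ∂μ₁ := integral_nonneg fun s => le_max_right _ _
  have h1z : ∫ s, f s ∂μ₁ = 0 := le_antisymm (by rw [h2z] at hle; exact hle) h1nn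
  have hae : f =ᵐ[μ₁] 0 :=
    (integral_eq_zero_iff_of_nonneg (fun s => le_max_right _ _) (integrable_call h₁ s₂u)).mp h1z
  have : μ₁ {s | f s ≠ 0} = 0 := by
    have := hae; rw [Filter.EventuallyEq, ae_iff] at this
    simpa using this
  refine measure_mono_null ?_ this
  intro s hs
  simp only [mem_setOf_eq, hf]
  have : (0:ℝ) < s - s₂u := by simpa using hs
  have : max (s - s₂u) 0 = s - s₂u := max_eq_left this.le
  rw [this]; exact ne_of_gt ‹(0:ℝ) < s - s₂u›

theorem mu1_Icc {τ S₀ s₂d s₂u : ℝ} {μ₁ μ₂ : Measure ℝ}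
    (h₁ : IsMarginal S₀ μ₁) (h₂ : IsMarginal S₀ μ₂) (hord : ConvexOrder μ₁ μ₂)
    (hsupp₂ : μ₂ (Set.Icc s₂d s₂u)ᶜ = 0) : μ₁ (Set.Icc s₂d s₂u)ᶜ = 0 := by
  have hsub : (Set.Icc s₂d s₂u)ᶜ ⊆ Set.Iio s₂d ∪ Set.Ioi s₂u := by
    intro s hs
    simp only [mem_compl_iff, mem_Icc, not_and_or, not_le] at hs
    rcases hs with h | h
    · exact Or.inl h
    · exact Or.inr h
  refine measure_mono_null hsub (measure_union_null ?_ ?_)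
  · exact mu1_Iio_null h₁ h₂ hord hsupp₂ (τ := τ)
  · exact mu1_Ioi_null h₁ h₂ hord hsupp₂ (τ := τ)

theorem ell_le {τ S₀ : ℝ} {μ₁ μ₂ : Measure ℝ} (hτ : 0 < τ)
    (h₁ : IsMarginal S₀ μ₁) (h₂ : IsMarginal S₀ μ₂) (hord : ConvexOrder μ₁ μ₂) :
    ∫ s, Lf τ s ∂μ₁ ≤ ∫ s, Lf τ s ∂μ₂ :=
  hord (Lf τ) (convexOn_Lf hτ) (integrable_Lf h₁ τ) (integrable_Lf h₂ τ)



theorem measurable_chord {τ s₂d s₂u : ℝ} : Measurable (chord τ s₂d s₂u) := by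
  unfold chord
  exact measurable_const.add ((measurable_id.sub_const _).const_mul _)

/-- The central superreplication construction: for any measurable `a` with
`b ≤ a ≤ amax`, `0 < a`, there is a portfolio of price
`∫ (1/(4a) + (a-b)Λ_b) dμ₁ + b (ℓ₂ - ℓ₁)`. -/
theorem portfolio_bound {τ S₀ s₂d s₂u : ℝ} {μ₁ μ₂ : Measure ℝ}
    (hτ : 0 < τ) (h0 : 0 < s₂d) (hdu : s₂d < s₂u)
    (h₁ : IsMarginal S₀ μ₁) (h₂ : IsMarginal S₀ μ₂)
    (hsupp₂ : μ₂ (Set.Icc s₂d s₂u)ᶜ = 0)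
    (a : ℝ → ℝ) (b amax : ℝ) (hb : 0 ≤ b) (hab : ∀ s, b ≤ a s)
    (hapos : ∀ s, 0 < a s) (haub : ∀ s, a s ≤ amax) (hameas : Measurable a)
    (hint1 : Integrable (fun s => 1 / (4 * a s)) μ₁)
    (hint2 : Integrable (fun s => (a s - b) * Lb τ s₂d s₂u s) μ₁) :
    PsuperE τ μ₁ μ₂ ≤
      ((∫ s, (1 / (4 * a s) + (a s - b) * Lb τ s₂d s₂u s) ∂μ₁
        + b * ((∫ s, Lf τ s ∂μ₂) - ∫ s, Lf τ s ∂μ₁) : ℝ) : EReal) := by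
  set m0 : ℝ := (Lf τ s₂u - Lf τ s₂d) / (s₂u - s₂d) with hm0
  set u₁ : ℝ → ℝ := fun s => 1 / (4 * a s) + (a s - b) * Lb τ s₂d s₂u s - b * Lf τ s with hu₁
  set u₂ : ℝ → ℝ := fun s => b * Lf τ s
      + (amax - b) * max (Lf τ s - chord τ s₂d s₂u s) 0 with hu₂
  set ΔS : ℝ → ℝ → ℝ := fun s _ => (a s - b) * m0 with hΔS
  set ΔL : ℝ → ℝ → ℝ := fun s _ => -(a s) with hΔL
  have hu₂ae : u₂ =ᵐ[μ₂] fun s => b * Lf τ s := by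
    filter_upwards [ae_Icc h₂ hsupp₂] with s hs
    have : max (Lf τ s - chord τ s₂d s₂u s) 0 = 0 :=
      max_eq_right (by linarith [Lf_le_chord hτ h0 hdu hs.1 hs.2])
    simp only [hu₂, this, mul_zero, add_zero]
  have hintu₂ : Integrable u₂ μ₂ := ((integrable_Lf h₂ τ).const_mul b).congr hu₂ae.symm
  have hint12 : Integrable (fun s => 1 / (4 * a s) + (a s - b) * Lb τ s₂d s₂u s) μ₁ :=
    hint1.add hint2
  have hintu₁ : Integrable u₁ μ₁ :=
    hint12.sub ((integrable_Lf h₁ τ).const_mul b)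
  have hrep : IsSuperRep τ μ₁ μ₂ u₁ u₂ ΔS ΔL := by
    constructor
    · exact ((measurable_const.div (hameas.const_mul 4)).add
        ((hameas.sub_const b).mul measurable_Lb)).sub (measurable_Lf.const_mul b)
    · exact (measurable_Lf.const_mul b).add
        (((measurable_Lf.sub measurable_chord).max measurable_const).const_mul _)
    · exact ((hameas.comp measurable_fst).sub_const b).mul_const m0
    · exact (hameas.comp measurable_fst).neg
    · exact hintu₁
    · exact hintu₂
    · intro s₁ s₂ v hs₁ hs₂ hv
      have hL : Lf τ (s₂ / s₁) = Lf τ s₂ - Lf τ s₁ := Lf_div hs₂ hs₁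
      have hLb : Lb τ s₂d s₂u s₁ = chord τ s₂d s₂u s₁ - Lf τ s₁ := Lb_eq h0 hdu hs₁
      have hch : chord τ s₂d s₂u s₂ = chord τ s₂d s₂u s₁ + m0 * (s₂ - s₁) :=
        chord_affine s₁ s₂
      simp only [hu₁, hu₂, hΔS, hΔL]
      rw [hL, hLb, hch]
      set A := a s₁ with hA
      have hApos : 0 < A := hapos s₁
      have hAb : b ≤ A := hab s₁
      have hAm : A ≤ amax := haub s₁
      set X : ℝ := Lf τ s₂ - (chord τ s₂d s₂u s₁ + m0 * (s₂ - s₁)) with hX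
      have key : v - A * v ^ 2 ≤ 1 / (4 * A) := by
        rw [le_div_iff₀ (by positivity : (0:ℝ) < 4 * A)]
        nlinarith [sq_nonneg (2 * A * v - 1)]
      have hXcase : (A - b) * X ≤ (amax - b) * max X 0 := by
        rcases le_or_gt 0 X with hx | hx
        · rw [max_eq_left hx]
          exact mul_le_mul_of_nonneg_right (by linarith) hx
        · rw [max_eq_right hx.le, mul_zero]
          exact mul_nonpos_of_nonneg_of_nonpos (by linarith : (0:ℝ) ≤ A - b) hx.le
      nlinarith [key, hXcase]
  have hIu₂ : ∫ s, u₂ s ∂μ₂ = b * ∫ s, Lf τ s ∂μ₂ := by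
    rw [integral_congr_ae hu₂ae, integral_const_mul]
  have hIu₁ : ∫ s, u₁ s ∂μ₁
      = (∫ s, (1 / (4 * a s) + (a s - b) * Lb τ s₂d s₂u s) ∂μ₁) - b * ∫ s, Lf τ s ∂μ₁ := by
    simp only [hu₁]
    rw [integral_sub hint12 ((integrable_Lf h₁ τ).const_mul b), integral_const_mul]
  have hmem : (((∫ s, u₁ s ∂μ₁) + ∫ s, u₂ s ∂μ₂ : ℝ) : EReal)
      ∈ {y : EReal | ∃ w₁ w₂ DS DL, IsSuperRep τ μ₁ μ₂ w₁ w₂ DS DL ∧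
        y = (((∫ s, w₁ s ∂μ₁) + ∫ s, w₂ s ∂μ₂ : ℝ) : EReal)} :=
    ⟨u₁, u₂, ΔS, ΔL, hrep, rfl⟩
  have hle : PsuperE τ μ₁ μ₂ ≤ (((∫ s, u₁ s ∂μ₁) + ∫ s, u₂ s ∂μ₂ : ℝ) : EReal) :=
    sInf_le hmem
  have heq : (∫ s, u₁ s ∂μ₁) + ∫ s, u₂ s ∂μ₂
      = ∫ s, (1 / (4 * a s) + (a s - b) * Lb τ s₂d s₂u s) ∂μ₁
        + b * ((∫ s, Lf τ s ∂μ₂) - ∫ s, Lf τ s ∂μ₁) := by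
    rw [hIu₁, hIu₂]; ring
  rw [heq] at hle
  exact hle



theorem cond_i {τ S₀ s₂d s₂u : ℝ} {μ₁ μ₂ : Measure ℝ}
    (hτ : 0 < τ) (h0 : 0 < s₂d) (hdu : s₂d < s₂u)
    (h₁ : IsMarginal S₀ μ₁) (h₂ : IsMarginal S₀ μ₂)
    (hsupp₂ : μ₂ (Set.Icc s₂d s₂u)ᶜ = 0)
    {σ : ℝ} (hIσ : ∫ s, lamb τ s₂d s₂u s ∂μ₁ < σ) :
    PsuperE τ μ₁ μ₂ < (σ : EReal) := by
  haveI := h₁.prob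
  set I : ℝ := ∫ s, lamb τ s₂d s₂u s ∂μ₁ with hI
  set ε : ℝ := (σ - I) / 2 with hε'
  have hε : 0 < ε := by simp only [hε']; linarith
  set a : ℝ → ℝ := fun s => 1 / (2 * max (lamb τ s₂d s₂u s) ε) with ha
  have hMpos : ∀ s, 0 < max (lamb τ s₂d s₂u s) ε := fun s => lt_of_lt_of_le hε (le_max_right _ _)
  have hapos : ∀ s, 0 < a s := fun s => by
    simp only [ha]; positivity
  have haub : ∀ s, a s ≤ 1 / (2 * ε) := fun s => by
    simp only [ha]
    apply one_div_le_one_div_of_le (by positivity)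
    have := le_max_right (lamb τ s₂d s₂u s) ε; linarith
  have hameas : Measurable a := by
    apply Measurable.div measurable_const
    exact (measurable_lamb.max measurable_const).const_mul 2
  have hMint : Integrable (fun s => max (lamb τ s₂d s₂u s) ε) μ₁ := by
    have hg : Integrable (fun s => lamb τ s₂d s₂u s + ε) μ₁ :=
      (integrable_lamb h₁ h0 hdu).add (integrable_const ε)
    refine hg.mono' (measurable_lamb.max measurable_const).aestronglyMeasurable ?_
    filter_upwards with s
    rw [Real.norm_eq_abs, abs_of_nonneg (le_trans hε.le (le_max_right _ _))]
    exact max_le (by linarith [lamb_nonneg (τ := τ) (s₂d := s₂d) (s₂u := s₂u) s, hε]) (by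
      linarith [lamb_nonneg (τ := τ) (s₂d := s₂d) (s₂u := s₂u) s])
  have hfun14 : (fun s => 1 / (4 * a s)) = fun s => max (lamb τ s₂d s₂u s) ε / 2 := by
    funext s
    have := hMpos s
    simp only [ha]
    rw [one_div, one_div, mul_inv, inv_inv]
    field_simp
    ring
  have hint1 : Integrable (fun s => 1 / (4 * a s)) μ₁ := by
    rw [hfun14]; exact hMint.div_const 2
  have hint2 : Integrable (fun s => (a s - 0) * Lb τ s₂d s₂u s) μ₁ := by
    refine (integrable_Lb h₁ h0 hdu).bdd_mul
      ((hameas.sub_const 0).aestronglyMeasurable) (c := 1 / (2 * ε)) (ae_of_all _ fun s => ?_)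
    rw [Real.norm_eq_abs, sub_zero, abs_of_nonneg (hapos s).le]
    exact haub s
  have hbd := portfolio_bound hτ h0 hdu h₁ h₂ hsupp₂ a 0 (1 / (2 * ε)) le_rfl
    (fun s => (hapos s).le) hapos haub hameas hint1 hint2
  have hpt : ∀ s, 1 / (4 * a s) + (a s - 0) * Lb τ s₂d s₂u s ≤ lamb τ s₂d s₂u s + ε := by
    intro s
    have hfun14s : 1 / (4 * a s) = max (lamb τ s₂d s₂u s) ε / 2 := congrFun hfun14 s
    set L := lamb τ s₂d s₂u s with hLdef
    set B := Lb τ s₂d s₂u s with hBdef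
    have hL0 : 0 ≤ L := lamb_nonneg s
    have hBL : B ≤ L ^ 2 := Lb_le_sq_lamb s
    rw [hfun14s, sub_zero]
    simp only [ha]
    rcases le_total ε L with hc | hc
    · rw [max_eq_left hc]
      have hLpos : 0 < L := lt_of_lt_of_le hε hc
      have h2 : 1 / (2 * L) * B ≤ 1 / (2 * L) * L ^ 2 :=
        mul_le_mul_of_nonneg_left hBL (by positivity)
      have h3 : 1 / (2 * L) * L ^ 2 = L / 2 := by field_simp
      rw [h3] at h2
      linarith
    · rw [max_eq_right hc]
      have h2 : B ≤ L * ε := le_trans hBL (by nlinarith)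
      have h3 : 1 / (2 * ε) * B ≤ 1 / (2 * ε) * (L * ε) :=
        mul_le_mul_of_nonneg_left h2 (by positivity)
      have h4 : 1 / (2 * ε) * (L * ε) = L / 2 := by field_simp
      rw [h4] at h3
      linarith
  have hint12 : Integrable (fun s => 1 / (4 * a s) + (a s - 0) * Lb τ s₂d s₂u s) μ₁ :=
    hint1.add hint2
  have hintR : Integrable (fun s => lamb τ s₂d s₂u s + ε) μ₁ :=
    (integrable_lamb h₁ h0 hdu).add (integrable_const ε)
  have hIle : ∫ s, (1 / (4 * a s) + (a s - 0) * Lb τ s₂d s₂u s) ∂μ₁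
      ≤ ∫ s, (lamb τ s₂d s₂u s + ε) ∂μ₁ := integral_mono hint12 hintR hpt
  have hIR : ∫ s, (lamb τ s₂d s₂u s + ε) ∂μ₁ = I + ε := by
    rw [integral_add (integrable_lamb h₁ h0 hdu) (integrable_const ε), integral_const,
      probReal_univ]
    simp [hI]
  have hfinal : ∫ s, (1 / (4 * a s) + (a s - 0) * Lb τ s₂d s₂u s) ∂μ₁
      + 0 * ((∫ s, Lf τ s ∂μ₂) - ∫ s, Lf τ s ∂μ₁) < σ := by
    rw [zero_mul, add_zero]
    have : I + ε < σ := by simp only [hε']; linarith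
    linarith [hIle, hIR.le, hIR.ge]
  calc PsuperE τ μ₁ μ₂ ≤ _ := hbd
    _ < (σ : EReal) := EReal.coe_lt_coe_iff.mpr hfinal



theorem cond_perturb {τ S₀ s₂d s₂u : ℝ} {μ₁ μ₂ : Measure ℝ}
    (hτ : 0 < τ) (h0 : 0 < s₂d) (hdu : s₂d < s₂u)
    (h₁ : IsMarginal S₀ μ₁) (h₂ : IsMarginal S₀ μ₂)
    (hsupp₂ : μ₂ (Set.Icc s₂d s₂u)ᶜ = 0)
    {σ : ℝ} (hσ : 0 < σ) (hσsq : σ ^ 2 = (∫ s, Lf τ s ∂μ₂) - ∫ s, Lf τ s ∂μ₁)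
    {U : Set ℝ} (hUm : MeasurableSet U) {δ : ℝ} (hδ : 0 < δ)
    (hUsub : ∀ s ∈ U, Lb τ s₂d s₂u s ≤ σ ^ 2 - δ) (hUpos : μ₁ U ≠ 0) :
    PsuperE τ μ₁ μ₂ < (σ : EReal) := by
  haveI := h₁.prob
  set b : ℝ := 1 / (2 * σ) with hbdef
  set t : ℝ := δ / (8 * σ ^ 3) with htdef
  have hb : 0 < b := by positivity
  have ht : 0 < t := by positivity
  have hstar : t * (σ ^ 2 - δ) + (1 / (4 * (b + t)) - 1 / (4 * b)) ≤ -(t * δ / 2) := by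
    have hbt : 0 < b + t := by positivity
    have h1 : 1 / (4 * (b + t)) - 1 / (4 * b) = -(t / (4 * b * (b + t))) := by
      field_simp; ring
    rw [h1]
    have hc : 4 * b * (b + t) = (4 * σ ^ 2 + δ) / (4 * σ ^ 4) := by
      simp only [hbdef, htdef]; field_simp; ring
    have hineq : (σ ^ 2 - δ / 2) * (4 * b * (b + t)) ≤ 1 := by
      rw [hc, mul_div_assoc', div_le_one (by positivity)]
      nlinarith
    have hcpos : 0 < 4 * b * (b + t) := by positivity
    have h2 : t * (σ ^ 2 - δ / 2) ≤ t / (4 * b * (b + t)) := by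
      have h3 : σ ^ 2 - δ / 2 ≤ 1 / (4 * b * (b + t)) := (le_div_iff₀ hcpos).mpr hineq
      calc t * (σ ^ 2 - δ / 2) ≤ t * (1 / (4 * b * (b + t))) :=
            mul_le_mul_of_nonneg_left h3 ht.le
        _ = t / (4 * b * (b + t)) := by rw [mul_one_div]
    linarith
  set a : ℝ → ℝ := fun s => b + t * U.indicator (fun _ => (1:ℝ)) s with hadef
  have hind01 : ∀ s, 0 ≤ U.indicator (fun _ => (1:ℝ)) s ∧ U.indicator (fun _ => (1:ℝ)) s ≤ 1 := by
    intro s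
    by_cases hs : s ∈ U <;> simp [Set.indicator_of_mem, Set.indicator_of_notMem, hs]
  have hab : ∀ s, b ≤ a s := fun s => by
    simp only [hadef]
    nlinarith [(hind01 s).1, ht]
  have hapos : ∀ s, 0 < a s := fun s => lt_of_lt_of_le hb (hab s)
  have haub : ∀ s, a s ≤ b + t := fun s => by
    simp only [hadef]
    nlinarith [(hind01 s).2, ht]
  have hindmeas : Measurable (U.indicator (fun _ => (1:ℝ))) :=
    measurable_const.indicator hUm
  have hameas : Measurable a := measurable_const.add (hindmeas.const_mul t)
  have hint1 : Integrable (fun s => 1 / (4 * a s)) μ₁ := by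
    refine (integrable_const (1 / (4 * b))).mono'
      (measurable_const.div (hameas.const_mul 4)).aestronglyMeasurable ?_
    filter_upwards with s
    have h4a : (0:ℝ) < 4 * a s := by linarith [hapos s]
    rw [Real.norm_eq_abs, abs_of_nonneg (one_div_nonneg.mpr h4a.le)]
    apply one_div_le_one_div_of_le (by linarith : (0:ℝ) < 4 * b)
    linarith [hab s]
  have hint2 : Integrable (fun s => (a s - b) * Lb τ s₂d s₂u s) μ₁ := by
    refine (integrable_Lb h₁ h0 hdu).bdd_mul
      (hameas.sub_const b).aestronglyMeasurable (c := t) (ae_of_all _ fun s => ?_)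
    rw [Real.norm_eq_abs, abs_of_nonneg (by linarith [hab s])]
    linarith [haub s]
  have hbd := portfolio_bound hτ h0 hdu h₁ h₂ hsupp₂ a b (b + t) hb.le hab hapos haub
    hameas hint1 hint2
  -- rewrite the integrand using an indicator decomposition
  have hgrw : (fun s => 1 / (4 * a s) + (a s - b) * Lb τ s₂d s₂u s)
      = fun s => 1 / (4 * b)
          + U.indicator (fun s => 1 / (4 * (b + t)) - 1 / (4 * b) + t * Lb τ s₂d s₂u s) s := by
    funext s
    by_cases hs : s ∈ U
    · simp only [hadef, Set.indicator_of_mem hs, mul_one]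
      ring
    · simp only [hadef, Set.indicator_of_notMem hs, mul_zero, add_zero]
      ring
  have hhint : Integrable (fun s => 1 / (4 * (b + t)) - 1 / (4 * b) + t * Lb τ s₂d s₂u s) μ₁ :=
    (integrable_const _).add ((integrable_Lb h₁ h0 hdu).const_mul t)
  have hIind : ∫ s, U.indicator
        (fun s => 1 / (4 * (b + t)) - 1 / (4 * b) + t * Lb τ s₂d s₂u s) s ∂μ₁
      = ∫ s in U, (1 / (4 * (b + t)) - 1 / (4 * b) + t * Lb τ s₂d s₂u s) ∂μ₁ :=
    integral_indicator hUm
  have hμU : 0 < (μ₁ U).toReal :=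
    ENNReal.toReal_pos hUpos (measure_ne_top μ₁ U)
  have hsetle : ∫ s in U, (1 / (4 * (b + t)) - 1 / (4 * b) + t * Lb τ s₂d s₂u s) ∂μ₁
      ≤ ∫ _ in U, (-(t * δ / 2)) ∂μ₁ := by
    refine setIntegral_mono_on hhint.integrableOn (integrable_const _).integrableOn hUm ?_
    intro s hs
    have h5 : t * Lb τ s₂d s₂u s ≤ t * (σ ^ 2 - δ) :=
      mul_le_mul_of_nonneg_left (hUsub s hs) ht.le
    linarith [hstar]
  have hsetc : ∫ _ in U, (-(t * δ / 2)) ∂μ₁ = (μ₁ U).toReal * (-(t * δ / 2)) := by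
    rw [setIntegral_const, smul_eq_mul, measureReal_def]
  have hIglt : ∫ s, (1 / (4 * a s) + (a s - b) * Lb τ s₂d s₂u s) ∂μ₁ < 1 / (4 * b) := by
    rw [hgrw, integral_add (integrable_const _) (hhint.indicator hUm), integral_const,
      probReal_univ, hIind]
    have : ∫ s in U, (1 / (4 * (b + t)) - 1 / (4 * b) + t * Lb τ s₂d s₂u s) ∂μ₁ < 0 := by
      refine lt_of_le_of_lt (hsetle.trans hsetc.le) ?_
      have : 0 < t * δ / 2 := by positivity
      nlinarith
    simp only [ENNReal.toReal_one, one_smul]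
    linarith
  have hb14 : 1 / (4 * b) = σ / 2 := by
    rw [hbdef]; field_simp; ring
  have hbσ : b * ((∫ s, Lf τ s ∂μ₂) - ∫ s, Lf τ s ∂μ₁) = σ / 2 := by
    rw [← hσsq, hbdef]; field_simp
  have hfinal : ∫ s, (1 / (4 * a s) + (a s - b) * Lb τ s₂d s₂u s) ∂μ₁
      + b * ((∫ s, Lf τ s ∂μ₂) - ∫ s, Lf τ s ∂μ₁) < σ := by
    rw [hbσ]
    rw [hb14] at hIglt
    linarith
  calc PsuperE τ μ₁ μ₂ ≤ _ := hbd
    _ < (σ : EReal) := EReal.coe_lt_coe_iff.mpr hfinal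



theorem continuousAt_Lb {τ s₂d s₂u : ℝ} (h0 : 0 < s₂d) (hdu : s₂d < s₂u) {s : ℝ} (hs : 0 < s) :
    ContinuousAt (Lb τ s₂d s₂u) s := by
  have hu : 0 < s₂u := h0.trans hdu
  have hdiv1 : ContinuousAt (fun x : ℝ => s₂u / x) s :=
    continuousAt_const.div continuousAt_id hs.ne'
  have hdiv2 : ContinuousAt (fun x : ℝ => s₂d / x) s :=
    continuousAt_const.div continuousAt_id hs.ne'
  have hlog1 : ContinuousAt (fun x : ℝ => -(2 / τ) * Real.log (s₂u / x)) s :=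
    ((Real.continuousAt_log (div_pos hu hs).ne').comp hdiv1).const_mul _
  have hlog2 : ContinuousAt (fun x : ℝ => -(2 / τ) * Real.log (s₂d / x)) s :=
    ((Real.continuousAt_log (div_pos h0 hs).ne').comp hdiv2).const_mul _
  have hpiU : ContinuousAt (fun x : ℝ => (x - s₂d) / (s₂u - s₂d)) s :=
    (continuousAt_id.sub continuousAt_const).div_const _
  have hpiD : ContinuousAt (fun x : ℝ => (s₂u - x) / (s₂u - s₂d)) s :=
    (continuousAt_const.sub continuousAt_id).div_const _
  exact (hpiU.mul hlog1).add (hpiD.mul hlog2)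

theorem cond_ii {τ S₀ s₂d s₂u s₁d : ℝ} {μ₁ μ₂ : Measure ℝ}
    (hτ : 0 < τ) (h0 : 0 < s₂d) (hdu : s₂d < s₂u)
    (h₁ : IsMarginal S₀ μ₁) (h₂ : IsMarginal S₀ μ₂) (hord : ConvexOrder μ₁ μ₂)
    (hsupp₂ : μ₂ (Set.Icc s₂d s₂u)ᶜ = 0)
    (hmin₁' : ∀ δ : ℝ, 0 < δ → μ₁ (Set.Ico s₁d (s₁d + δ)) ≠ 0)
    {σ : ℝ} (hσdef : σ = Real.sqrt ((∫ s, Lf τ s ∂μ₂) - ∫ s, Lf τ s ∂μ₁))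
    (hyp : Lf τ s₂d - (∫ s, Lf τ s ∂μ₂) < Lf τ s₁d - ∫ s, Lf τ s ∂μ₁) :
    PsuperE τ μ₁ μ₂ < (σ : EReal) := by
  have hℓle := ell_le hτ h₁ h₂ hord
  have hσsq : σ ^ 2 = (∫ s, Lf τ s ∂μ₂) - ∫ s, Lf τ s ∂μ₁ := by
    rw [hσdef, Real.sq_sqrt (by linarith)]
  have hs₁d_ge : s₂d ≤ s₁d := by
    by_contra hcon
    push_neg at hcon
    refine hmin₁' (s₂d - s₁d) (by linarith) ?_
    refine measure_mono_null ?_ (mu1_Iio_null (τ := τ) h₁ h₂ hord hsupp₂)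
    intro s hs
    simp only [mem_Ico] at hs
    simp only [mem_Iio]
    linarith [hs.2]
  have hs₁d_le : s₁d ≤ s₂u := by
    by_contra hcon
    push_neg at hcon
    refine hmin₁' 1 one_pos ?_
    refine measure_mono_null ?_ (mu1_Ioi_null (τ := τ) h₁ h₂ hord hsupp₂)
    intro s hs
    simp only [mem_Ico] at hs
    simp only [mem_Ioi]
    linarith [hs.1]
  have hs₁d_pos : 0 < s₁d := lt_of_lt_of_le h0 hs₁d_ge
  have hLb0 : 0 ≤ Lb τ s₂d s₂u s₁d := Lb_nonneg hτ h0 hdu hs₁d_ge hs₁d_le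
  have hm0neg : (Lf τ s₂u - Lf τ s₂d) / (s₂u - s₂d) ≤ 0 := by
    have hlog : Real.log s₂d < Real.log s₂u := Real.log_lt_log h0 hdu
    have : Lf τ s₂u ≤ Lf τ s₂d := by
      unfold Lf
      have hc : (0:ℝ) < 2 / τ := by positivity
      nlinarith
    apply div_nonpos_of_nonpos_of_nonneg <;> linarith
  have hchord : chord τ s₂d s₂u s₁d ≤ Lf τ s₂d := by
    unfold chord
    nlinarith [mul_nonpos_of_nonpos_of_nonneg hm0neg (by linarith : (0:ℝ) ≤ s₁d - s₂d)]
  have hLblt : Lb τ s₂d s₂u s₁d < σ ^ 2 := by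
    rw [Lb_eq h0 hdu hs₁d_pos, hσsq]
    linarith
  have hσpos : 0 < σ := by
    have hσ0 : (0:ℝ) ≤ σ := by rw [hσdef]; exact Real.sqrt_nonneg _
    rcases lt_or_eq_of_le hσ0 with h | h
    · exact h
    · exfalso
      rw [← h] at hLblt
      norm_num at hLblt
      linarith
  set δ : ℝ := (σ ^ 2 - Lb τ s₂d s₂u s₁d) / 2 with hδdef
  have hδ : 0 < δ := by simp only [hδdef]; linarith
  have hlt : Lb τ s₂d s₂u s₁d < σ ^ 2 - δ := by simp only [hδdef]; linarith
  have hcont : ContinuousAt (Lb τ s₂d s₂u) s₁d := continuousAt_Lb h0 hdu hs₁d_pos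
  have hnhds : (Lb τ s₂d s₂u) ⁻¹' (Set.Iio (σ ^ 2 - δ)) ∈ nhds s₁d :=
    hcont (Iio_mem_nhds hlt)
  obtain ⟨η, hη, hball⟩ := Metric.mem_nhds_iff.mp hnhds
  refine cond_perturb hτ h0 hdu h₁ h₂ hsupp₂ hσpos hσsq
    (measurableSet_Ico : MeasurableSet (Set.Ico s₁d (s₁d + η))) hδ ?_ (hmin₁' η hη)
  intro s hs
  have : s ∈ Metric.ball s₁d η := by
    rw [Metric.mem_ball, Real.dist_eq, abs_lt]
    simp only [mem_Ico] at hs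
    constructor <;> linarith [hs.1, hs.2]
  exact (hball this).le

theorem bullet4 {τ S₀ s₂d s₂u : ℝ} {μ₁ μ₂ : Measure ℝ}
    (hτ : 0 < τ) (h0 : 0 < s₂d) (hdu : s₂d < s₂u)
    (h₁ : IsMarginal S₀ μ₁) (h₂ : IsMarginal S₀ μ₂) (hord : ConvexOrder μ₁ μ₂)
    (hsupp₂ : μ₂ (Set.Icc s₂d s₂u)ᶜ = 0)
    {σ : ℝ} (hσdef : σ = Real.sqrt ((∫ s, Lf τ s ∂μ₂) - ∫ s, Lf τ s ∂μ₁)) :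
    σ ≤ lamBar τ s₂d s₂u := by
  haveI := h₁.prob
  have hℓle := ell_le hτ h₁ h₂ hord
  have hcontOn : ContinuousOn (Lb τ s₂d s₂u) (Set.Icc s₂d s₂u) := fun s hs =>
    (continuousAt_Lb h0 hdu (lt_of_lt_of_le h0 hs.1)).continuousWithinAt
  obtain ⟨sm, hsmmem, hsmmax⟩ := isCompact_Icc.exists_isMaxOn
    (nonempty_Icc.mpr hdu.le) hcontOn
  have hE1 : ∫ s, Lb τ s₂d s₂u s ∂μ₁ ≤ Lb τ s₂d s₂u sm := by
    have hconst : ∫ _, Lb τ s₂d s₂u sm ∂μ₁ = Lb τ s₂d s₂u sm := by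
      rw [integral_const, probReal_univ]; simp
    rw [← hconst]
    refine integral_mono_ae (integrable_Lb h₁ h0 hdu) (integrable_const _) ?_
    filter_upwards [ae_Icc h₁ (mu1_Icc (τ := τ) h₁ h₂ hord hsupp₂)] with s hs
    exact hsmmax hs
  have hE2 : 0 ≤ ∫ s, Lb τ s₂d s₂u s ∂μ₂ := by
    refine integral_nonneg_of_ae ?_
    filter_upwards [ae_Icc h₂ hsupp₂] with s hs
    exact Lb_nonneg hτ h0 hdu hs.1 hs.2
  have hI1 := integral_Lb h₁ h0 hdu (τ := τ) (s₂d := s₂d) (s₂u := s₂u)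
  have hI2 := integral_Lb h₂ h0 hdu (τ := τ) (s₂d := s₂d) (s₂u := s₂u)
  have hdiff : (∫ s, Lf τ s ∂μ₂) - ∫ s, Lf τ s ∂μ₁ ≤ Lb τ s₂d s₂u sm := by
    have : (∫ s, Lf τ s ∂μ₂) - ∫ s, Lf τ s ∂μ₁
        = (∫ s, Lb τ s₂d s₂u s ∂μ₁) - ∫ s, Lb τ s₂d s₂u s ∂μ₂ := by
      rw [hI1, hI2]; ring
    linarith
  have hsqle : σ ≤ lamb τ s₂d s₂u sm := by
    rw [hσdef]
    unfold lamb
    exact Real.sqrt_le_sqrt hdiff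
  have hlambOn : ContinuousOn (lamb τ s₂d s₂u) (Set.Icc s₂d s₂u) :=
    Real.continuous_sqrt.comp_continuousOn hcontOn
  have hbdd : BddAbove (lamb τ s₂d s₂u '' Set.Icc s₂d s₂u) :=
    (isCompact_Icc.image_of_continuousOn hlambOn).bddAbove
  exact hsqle.trans (le_csSup hbdd (mem_image_of_mem _ hsmmem))



theorem Lb_left {τ s₂d s₂u : ℝ} (h0 : s₂d ≠ 0) : Lb τ s₂d s₂u s₂d = 0 := by
  unfold Lb piU piD Lf
  simp [div_self h0, Real.log_one]

theorem Lb_right {τ s₂d s₂u : ℝ} (hu : s₂u ≠ 0) : Lb τ s₂d s₂u s₂u = 0 := by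
  unfold Lb piU piD Lf
  simp [div_self hu, Real.log_one]

theorem cond_iii {τ S₀ s₂d s₂u : ℝ} {μ₁ μ₂ : Measure ℝ}
    (hτ : 0 < τ) (h0 : 0 < s₂d) (hdu : s₂d < s₂u)
    (h₁ : IsMarginal S₀ μ₁) (h₂ : IsMarginal S₀ μ₂) (hord : ConvexOrder μ₁ μ₂)
    (hsupp₂ : μ₂ (Set.Icc s₂d s₂u)ᶜ = 0)
    {σ : ℝ} (hσdef : σ = Real.sqrt ((∫ s, Lf τ s ∂μ₂) - ∫ s, Lf τ s ∂μ₁))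
    (rlo rhi : ℝ) (hr1 : s₂d ≤ rlo) (hr2 : rlo ≤ rhi) (hr3 : rhi ≤ s₂u)
    (hlo : lamb τ s₂d s₂u rlo = σ) (hhi : lamb τ s₂d s₂u rhi = σ)
    (huniq : ∀ s : ℝ, s₂d ≤ s → s ≤ s₂u → lamb τ s₂d s₂u s = σ → s = rlo ∨ s = rhi)
    (hμU : μ₁ (Set.Ioo s₂d rlo ∪ Set.Ioo rhi s₂u) ≠ 0) :
    PsuperE τ μ₁ μ₂ < (σ : EReal) := by
  have hu : 0 < s₂u := h0.trans hdu
  have hℓle := ell_le hτ h₁ h₂ hord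
  have hσ0 : (0:ℝ) ≤ σ := by rw [hσdef]; exact Real.sqrt_nonneg _
  have hσsq : σ ^ 2 = (∫ s, Lf τ s ∂μ₂) - ∫ s, Lf τ s ∂μ₁ := by
    rw [hσdef, Real.sq_sqrt (by linarith)]
  have hlambd : lamb τ s₂d s₂u s₂d = 0 := by unfold lamb; rw [Lb_left h0.ne']; exact Real.sqrt_zero
  have hlambu : lamb τ s₂d s₂u s₂u = 0 := by unfold lamb; rw [Lb_right hu.ne']; exact Real.sqrt_zero
  rcases eq_or_lt_of_le hσ0 with hσz | hσpos
  · -- σ = 0 forces rlo = s₂d, rhi = s₂u, so the set is empty, contradiction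
    exfalso
    have e1 := huniq s₂d le_rfl hdu.le (by rw [hlambd, hσz])
    have hrlo : rlo = s₂d := by
      rcases e1 with h | h
      · exact h.symm
      · exact le_antisymm (by linarith) hr1
    have e2 := huniq s₂u hdu.le le_rfl (by rw [hlambu, hσz])
    have hrhi : rhi = s₂u := by
      rcases e2 with h | h
      · exact le_antisymm hr3 (by linarith)
      · exact h.symm
    exact hμU (by simp [hrlo, hrhi])
  · set U : Set ℝ := Set.Ioo s₂d rlo ∪ Set.Ioo rhi s₂u with hUdef
    have hUm : MeasurableSet U := measurableSet_Ioo.union measurableSet_Ioo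
    have hcontlamb : ∀ x y : ℝ, s₂d ≤ x →
        ContinuousOn (lamb τ s₂d s₂u) (Set.Icc x y) := by
      intro x y hx
      refine Real.continuous_sqrt.comp_continuousOn ?_
      intro z hz
      exact (continuousAt_Lb h0 hdu (lt_of_lt_of_le h0 (hx.trans hz.1))).continuousWithinAt
    have hUlt : ∀ s ∈ U, lamb τ s₂d s₂u s < σ := by
      intro s hs
      rcases hs with hs | hs
      · obtain ⟨hs1, hs2⟩ := hs
        have hsle : s ≤ s₂u := by linarith
        rcases lt_or_ge (lamb τ s₂d s₂u s) σ with h | h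
        · exact h
        · exfalso
          have hmem : σ ∈ Set.Icc (lamb τ s₂d s₂u s₂d) (lamb τ s₂d s₂u s) := by
            rw [hlambd]; exact ⟨hσ0, h⟩
          obtain ⟨c, hc, hceq⟩ :=
            intermediate_value_Icc hs1.le (hcontlamb s₂d s le_rfl) hmem
          rcases huniq c hc.1 (hc.2.trans hsle) hceq with hcr | hcr
          · rw [hcr] at hc; linarith [hc.2]
          · rw [hcr] at hc; linarith [hc.2]
      · obtain ⟨hs1, hs2⟩ := hs
        have hsge : s₂d ≤ s := by linarith
        rcases lt_or_ge (lamb τ s₂d s₂u s) σ with h | h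
        · exact h
        · exfalso
          have hmem : σ ∈ Set.Icc (lamb τ s₂d s₂u s₂u) (lamb τ s₂d s₂u s) := by
            rw [hlambu]; exact ⟨hσ0, h⟩
          obtain ⟨c, hc, hceq⟩ :=
            intermediate_value_Icc' hs2.le (hcontlamb s s₂u hsge) hmem
          rcases huniq c (hsge.trans hc.1) hc.2 hceq with hcr | hcr
          · rw [hcr] at hc; linarith [hc.1]
          · rw [hcr] at hc; linarith [hc.1]
    have hcover : U ⊆ ⋃ n : ℕ, (U ∩ {s | Lb τ s₂d s₂u s ≤ σ ^ 2 - 1 / (n + 1)}) := by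
      intro s hs
      have hlt : Lb τ s₂d s₂u s < σ ^ 2 := by
        have h1 := Lb_le_sq_lamb (τ := τ) (s₂d := s₂d) (s₂u := s₂u) s
        have h2 := hUlt s hs
        have h3 := lamb_nonneg (τ := τ) (s₂d := s₂d) (s₂u := s₂u) s
        nlinarith
      obtain ⟨n, hn⟩ := exists_nat_one_div_lt (show (0:ℝ) < σ ^ 2 - Lb τ s₂d s₂u s by linarith)
      exact Set.mem_iUnion.mpr ⟨n, hs, by simp only [mem_setOf_eq]; push_cast; push_cast at hn; linarith⟩
    have hex : ∃ n : ℕ, μ₁ (U ∩ {s | Lb τ s₂d s₂u s ≤ σ ^ 2 - 1 / (n + 1)}) ≠ 0 := by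
      by_contra hcon
      push_neg at hcon
      exact hμU (measure_mono_null hcover (measure_iUnion_null hcon))
    obtain ⟨n, hn⟩ := hex
    have hδ : (0:ℝ) < 1 / (n + 1) := by positivity
    refine cond_perturb hτ h0 hdu h₁ h₂ hsupp₂ hσpos hσsq
      (hUm.inter (measurable_Lb measurableSet_Iic)) hδ ?_ hn
    intro s hs
    exact hs.2



/-- `qfun x = x ⊔ 0` squared helper: `x * max x 0`, a C¹ function. -/
def qfun (x : ℝ) : ℝ := x * max x 0

theorem hasDerivAt_qfun (x : ℝ) : HasDerivAt qfun (2 * max x 0) x := by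
  rcases lt_trichotomy x 0 with hx | hx | hx
  · have hev : qfun =ᶠ[nhds x] fun _ => (0:ℝ) := by
      filter_upwards [Iio_mem_nhds hx] with y hy
      have hm : max y 0 = 0 := max_eq_right (le_of_lt hy)
      simp [qfun, hm]
    have h2 := (hasDerivAt_const x (0:ℝ)).congr_of_eventuallyEq hev
    have hval : (2:ℝ) * max x 0 = 0 := by rw [max_eq_right hx.le]; ring
    rw [hval]; exact h2
  · subst hx
    have hval : (2:ℝ) * max 0 0 = 0 := by norm_num
    rw [hval, hasDerivAt_iff_tendsto_slope]
    have hev : slope qfun 0 =ᶠ[nhdsWithin 0 {(0:ℝ)}ᶜ] fun y => max y 0 := by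
      filter_upwards [self_mem_nhdsWithin] with y hy
      have hy' : y ≠ 0 := hy
      rw [slope_def_field, qfun, qfun]
      field_simp
      ring
    rw [tendsto_congr' hev]
    have hcont : Tendsto (fun y : ℝ => max y 0) (nhds (0:ℝ)) (nhds (max (0:ℝ) 0)) :=
      (continuous_id.max continuous_const).tendsto 0
    simpa using hcont.mono_left (nhdsWithin_le_nhds (s := {(0:ℝ)}ᶜ))
  · have hev : qfun =ᶠ[nhds x] fun y => y * y := by
      filter_upwards [Ioi_mem_nhds hx] with y hy
      have hm : max y 0 = y := max_eq_left (le_of_lt hy)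
      simp [qfun, hm]
    have h2 := ((hasDerivAt_id x).mul (hasDerivAt_id x)).congr_of_eventuallyEq hev
    have hval : (2:ℝ) * max x 0 = 1 * x + x * 1 := by rw [max_eq_left hx.le]; ring
    rw [hval]; exact h2

/-- Smoothed call with strike `K` and half-width `r`. -/
def phiK (K r s : ℝ) : ℝ := (qfun (s - (K - r)) - qfun (s - (K + r))) / (4 * r)

theorem hasDerivAt_phiK (K r s : ℝ) :
    HasDerivAt (phiK K r)
      ((2 * max (s - (K - r)) 0 - 2 * max (s - (K + r)) 0) / (4 * r)) s := by
  have h1 : HasDerivAt (fun y : ℝ => qfun (y - (K - r))) (2 * max (s - (K - r)) 0) s := by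
    have := (hasDerivAt_qfun (s - (K - r))).comp s ((hasDerivAt_id s).sub_const (K - r))
    rw [mul_one] at this; exact this
  have h2 : HasDerivAt (fun y : ℝ => qfun (y - (K + r))) (2 * max (s - (K + r)) 0) s := by
    have := (hasDerivAt_qfun (s - (K + r))).comp s ((hasDerivAt_id s).sub_const (K + r))
    rw [mul_one] at this; exact this
  exact (h1.sub h2).div_const _

theorem clamp_eq (a₁ a₂ t : ℝ) (h12 : a₁ ≤ a₂) :
    max (t - a₁) 0 - max (t - a₂) 0 = min (max (t - a₁) 0) (a₂ - a₁) := by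
  rcases le_total t a₁ with h | h
  · rw [max_eq_right (by linarith), max_eq_right (by linarith), min_eq_left (by linarith)]
    ring
  · rcases le_total t a₂ with h' | h'
    · rw [max_eq_left (by linarith), max_eq_right (by linarith), min_eq_left (by linarith)]
      ring
    · rw [max_eq_left (by linarith), max_eq_left (by linarith), min_eq_right (by linarith)]
      ring

theorem convexOn_phiK {K r : ℝ} (hr : 0 < r) : ConvexOn ℝ (Ioi 0) (phiK K r) := by
  refine MonotoneOn.convexOn_of_deriv (convex_Ioi 0) ?_ ?_ ?_
  · exact fun s _ => (hasDerivAt_phiK K r s).differentiableAt.continuousAt.continuousWithinAt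
  · rw [interior_Ioi]
    exact fun s _ => (hasDerivAt_phiK K r s).differentiableAt.differentiableWithinAt
  · rw [interior_Ioi]
    intro x _ y _ hxy
    rw [(hasDerivAt_phiK K r x).deriv, (hasDerivAt_phiK K r y).deriv]
    rw [div_le_div_iff_of_pos_right (by positivity : (0:ℝ) < 4 * r)]
    have h12 : K - r ≤ K + r := by linarith
    have e1 := clamp_eq (K - r) (K + r) x h12
    have e2 := clamp_eq (K - r) (K + r) y h12
    have hmono : max (x - (K - r)) 0 - max (x - (K + r)) 0
        ≤ max (y - (K - r)) 0 - max (y - (K + r)) 0 := by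
      rw [e1, e2]
      exact min_le_min (max_le_max (by linarith) le_rfl) le_rfl
    linarith

set_option maxHeartbeats 1000000 in
theorem convexOn_Lf_sub_phiK {τ K r : ℝ} (hτ : 0 < τ) (hK : 0 < K) (hr : 0 < r)
    (hrK : r ≤ K / 2) :
    ConvexOn ℝ (Ioi 0) (fun s => Lf τ s - (r / (τ * K ^ 2)) * phiK K r s) := by
  have hderiv : ∀ s : ℝ, s ∈ Ioi (0:ℝ) →
      HasDerivAt (fun z => Lf τ z - (r / (τ * K ^ 2)) * phiK K r z)
        (-(2 / τ) * s⁻¹ - (r / (τ * K ^ 2))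
          * ((2 * max (s - (K - r)) 0 - 2 * max (s - (K + r)) 0) / (4 * r))) s := by
    intro s hs
    have h1 : HasDerivAt (Lf τ) (-(2 / τ) * s⁻¹) s := by
      unfold Lf
      exact (Real.hasDerivAt_log (ne_of_gt hs)).const_mul _
    exact h1.sub ((hasDerivAt_phiK K r s).const_mul _)
  refine MonotoneOn.convexOn_of_deriv (convex_Ioi 0) ?_ ?_ ?_
  · exact fun s hs => (hderiv s hs).differentiableAt.continuousAt.continuousWithinAt
  · rw [interior_Ioi]
    exact fun s hs => (hderiv s hs).differentiableAt.differentiableWithinAt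
  · rw [interior_Ioi]
    intro x hx y hy hxy
    rw [(hderiv x hx).deriv, (hderiv y hy).deriv]
    have hx : (0:ℝ) < x := hx
    have hy : (0:ℝ) < y := hy
    set a₁ : ℝ := K - r with ha₁
    set a₂ : ℝ := K + r with ha₂
    have h12 : a₁ ≤ a₂ := by simp only [ha₁, ha₂]; linarith
    have ha₁pos : 0 < a₁ := by simp only [ha₁]; linarith
    have ha₂le : a₂ ≤ 3 / 2 * K := by simp only [ha₂]; linarith
    have hψx : (r / (τ * K ^ 2)) * ((2 * max (x - a₁) 0 - 2 * max (x - a₂) 0) / (4 * r))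
        = (max (x - a₁) 0 - max (x - a₂) 0) / (2 * τ * K ^ 2) := by
      field_simp; ring
    have hψy : (r / (τ * K ^ 2)) * ((2 * max (y - a₁) 0 - 2 * max (y - a₂) 0) / (4 * r))
        = (max (y - a₁) 0 - max (y - a₂) 0) / (2 * τ * K ^ 2) := by
      field_simp; ring
    rw [hψx, hψy, clamp_eq a₁ a₂ x h12, clamp_eq a₁ a₂ y h12]
    set Cx : ℝ := min (max (x - a₁) 0) (a₂ - a₁) with hCx
    set Cy : ℝ := min (max (y - a₁) 0) (a₂ - a₁) with hCy
    have hCx0 : 0 ≤ Cx := le_min (le_max_right _ _) (by linarith)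
    have hCy0 : 0 ≤ Cy := le_min (le_max_right _ _) (by linarith)
    have hinvxy : y⁻¹ ≤ x⁻¹ := inv_anti₀ hx hxy
    have hmain : Cy - Cx ≤ 4 * K ^ 2 * (x⁻¹ - y⁻¹) := by
      rcases le_or_gt y a₁ with hya | hya
      · have hCyz : Cy = 0 := by
          rw [hCy, max_eq_right (by linarith), min_eq_left (by linarith)]
        rw [hCyz]
        have h4 : 0 ≤ 4 * K ^ 2 * (x⁻¹ - y⁻¹) := by
          apply mul_nonneg (by positivity); linarith
        linarith
      · rcases le_or_gt a₂ x with hxa | hxa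
        · have hCxf : Cx = a₂ - a₁ := by
            rw [hCx, max_eq_left (by linarith), min_eq_right (by linarith)]
          have hCyle : Cy ≤ a₂ - a₁ := min_le_right _ _
          have h4 : 0 ≤ 4 * K ^ 2 * (x⁻¹ - y⁻¹) := by
            apply mul_nonneg (by positivity); linarith
          rw [hCxf]; linarith
        · set x' : ℝ := max x a₁ with hx'
          set y' : ℝ := min y a₂ with hy'
          have hx'pos : 0 < x' := lt_of_lt_of_le ha₁pos (le_max_right _ _)
          have hy'pos : 0 < y' := lt_min hy (lt_of_lt_of_le ha₁pos h12)
          have hx'y' : x' ≤ y' := max_le (le_min hxy hxa.le) (le_min hya.le h12)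
          have hx'le : x' ≤ a₂ := max_le hxa.le h12
          have hy'le : y' ≤ a₂ := min_le_right _ _
          have hCyb : Cy ≤ y' - a₁ := by
            rcases le_total y a₂ with h' | h'
            · have : y' = y := min_eq_left h'
              rw [this]
              calc Cy ≤ max (y - a₁) 0 := min_le_left _ _
                _ = y - a₁ := max_eq_left (by linarith)
            · have : y' = a₂ := min_eq_right h'
              rw [this]
              exact min_le_right _ _
          have hCxb : x' - a₁ ≤ Cx := by
            rcases le_total x a₁ with h' | h'
            · have : x' = a₁ := max_eq_right h'
              rw [this]; simpa using hCx0
            · have hxx' : x' = x := max_eq_left h'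
              rw [hxx', hCx, max_eq_left (by linarith), min_eq_left (by linarith)]
          have hi1 : x'⁻¹ - y'⁻¹ ≤ x⁻¹ - y⁻¹ := by
            have e1 : x'⁻¹ ≤ x⁻¹ := inv_anti₀ hx (le_max_left _ _)
            have e2 : y⁻¹ ≤ y'⁻¹ := inv_anti₀ hy'pos (min_le_left _ _)
            linarith
          have hi3 : y' - x' ≤ 4 * K ^ 2 * (x'⁻¹ - y'⁻¹) := by
            rw [inv_sub_inv hx'pos.ne' hy'pos.ne']
            rw [← mul_div_assoc, le_div_iff₀ (by positivity)]
            have hxyK : x' * y' ≤ 4 * K ^ 2 := by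
              nlinarith [mul_le_mul hx'le hy'le hy'pos.le (by linarith : (0:ℝ) ≤ a₂)]
            nlinarith [sub_nonneg.mpr hx'y']
          have hi4 : 4 * K ^ 2 * (x'⁻¹ - y'⁻¹) ≤ 4 * K ^ 2 * (x⁻¹ - y⁻¹) :=
            mul_le_mul_of_nonneg_left hi1 (by positivity)
          linarith
    clear_value Cx Cy
    have hD : (0:ℝ) < 2 * τ * K ^ 2 := by positivity
    have h2 := (div_le_div_iff_of_pos_right hD).mpr hmain
    have h3 : 4 * K ^ 2 * (x⁻¹ - y⁻¹) / (2 * τ * K ^ 2) = 2 / τ * (x⁻¹ - y⁻¹) := by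
      rw [div_eq_iff hD.ne']
      field_simp
      ring
    rw [h3, sub_div] at h2
    linarith



theorem phiK_bounds {K r : ℝ} (hr : 0 < r) (s : ℝ) :
    max (s - K) 0 ≤ phiK K r s ∧ phiK K r s ≤ max (s - K) 0 + r := by
  have h4r : (0:ℝ) < 4 * r := by positivity
  unfold phiK qfun
  rcases le_total s (K - r) with h1 | h1
  · rw [max_eq_right (by linarith : s - (K - r) ≤ 0),
      max_eq_right (by linarith : s - (K + r) ≤ 0),
      max_eq_right (by linarith : s - K ≤ 0)]
    constructor
    · rw [le_div_iff₀ h4r]; nlinarith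
    · rw [div_le_iff₀ h4r]; nlinarith
  · rcases le_total s (K + r) with h2 | h2
    · rw [max_eq_left (by linarith : 0 ≤ s - (K - r)),
        max_eq_right (by linarith : s - (K + r) ≤ 0)]
      rcases le_total s K with h3 | h3
      · rw [max_eq_right (by linarith : s - K ≤ 0)]
        constructor
        · rw [le_div_iff₀ h4r]; nlinarith
        · rw [div_le_iff₀ h4r]; nlinarith
      · rw [max_eq_left (by linarith : 0 ≤ s - K)]
        constructor
        · rw [le_div_iff₀ h4r]; nlinarith
        · rw [div_le_iff₀ h4r]; nlinarith
    · rw [max_eq_left (by linarith : 0 ≤ s - (K - r)),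
        max_eq_left (by linarith : 0 ≤ s - (K + r)),
        max_eq_left (by linarith : 0 ≤ s - K)]
      constructor
      · rw [le_div_iff₀ h4r]; nlinarith
      · rw [div_le_iff₀ h4r]; nlinarith

theorem continuous_phiK (K r : ℝ) : Continuous (phiK K r) := by
  unfold phiK qfun
  exact (((continuous_id.sub continuous_const).mul
    ((continuous_id.sub continuous_const).max continuous_const)).sub
    ((continuous_id.sub continuous_const).mul
    ((continuous_id.sub continuous_const).max continuous_const))).div_const _

theorem integrable_phiK {S₀ K r : ℝ} {μ : Measure ℝ} (h : IsMarginal S₀ μ) (hr : 0 < r) :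
    Integrable (phiK K r) μ := by
  haveI := h.prob
  refine ((integrable_call h K).add (integrable_const r)).mono'
    (continuous_phiK K r).measurable.aestronglyMeasurable ?_
  filter_upwards with s
  obtain ⟨hb1, hb2⟩ := phiK_bounds (K := K) hr s
  rw [Real.norm_eq_abs, abs_of_nonneg (le_trans (le_max_right _ _) hb1), Pi.add_apply]
  exact hb2

theorem call_eq_of_ell_eq {τ S₀ : ℝ} {μ₁ μ₂ : Measure ℝ} (hτ : 0 < τ)
    (h₁ : IsMarginal S₀ μ₁) (h₂ : IsMarginal S₀ μ₂) (hord : ConvexOrder μ₁ μ₂)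
    (hell : (∫ s, Lf τ s ∂μ₁) = ∫ s, Lf τ s ∂μ₂) {K : ℝ} (hK : 0 < K) :
    (∫ s, max (s - K) 0 ∂μ₁) = ∫ s, max (s - K) 0 ∂μ₂ := by
  haveI := h₁.prob
  haveI := h₂.prob
  have hle : (∫ s, max (s - K) 0 ∂μ₁) ≤ ∫ s, max (s - K) 0 ∂μ₂ :=
    hord _ (convexOn_call K) (integrable_call h₁ K) (integrable_call h₂ K)
  refine le_antisymm hle ?_
  have key : ∀ r : ℝ, 0 < r → r ≤ K / 2 →
      (∫ s, max (s - K) 0 ∂μ₂) - ∫ s, max (s - K) 0 ∂μ₁ ≤ r := by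
    intro r hr hrK
    set l : ℝ := r / (τ * K ^ 2) with hl
    have hlpos : 0 < l := by simp only [hl]; positivity
    have hphi1 := integrable_phiK (K := K) (r := r) h₁ hr
    have hphi2 := integrable_phiK (K := K) (r := r) h₂ hr
    have d1 : (∫ s, phiK K r s ∂μ₁) ≤ ∫ s, phiK K r s ∂μ₂ :=
      hord _ (convexOn_phiK hr) hphi1 hphi2
    have hgint1 : Integrable (fun s => Lf τ s - l * phiK K r s) μ₁ :=
      (integrable_Lf h₁ τ).sub (hphi1.const_mul l)
    have hgint2 : Integrable (fun s => Lf τ s - l * phiK K r s) μ₂ :=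
      (integrable_Lf h₂ τ).sub (hphi2.const_mul l)
    have d2 := hord _ (convexOn_Lf_sub_phiK hτ hK hr hrK) hgint1 hgint2
    rw [integral_sub (integrable_Lf h₁ τ) (hphi1.const_mul l),
      integral_sub (integrable_Lf h₂ τ) (hphi2.const_mul l),
      integral_const_mul, integral_const_mul] at d2
    have dphi : (∫ s, phiK K r s ∂μ₁) = ∫ s, phiK K r s ∂μ₂ := by
      refine le_antisymm d1 ?_
      have h5 : l * (∫ s, phiK K r s ∂μ₂) ≤ l * ∫ s, phiK K r s ∂μ₁ := by linarith
      exact le_of_mul_le_mul_left h5 hlpos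
    have e2 : ∫ s, (max (s - K) 0 - phiK K r s) ∂μ₂ ≤ 0 := by
      refine integral_nonpos fun s => ?_
      simp only [Pi.zero_apply]
      linarith [(phiK_bounds (K := K) hr s).1]
    have e1 : -r ≤ ∫ s, (max (s - K) 0 - phiK K r s) ∂μ₁ := by
      have hint : Integrable (fun s => max (s - K) 0 - phiK K r s) μ₁ :=
        (integrable_call h₁ K).sub hphi1
      have := integral_mono (integrable_const (-r)) hint (fun s => by
        simp only
        linarith [(phiK_bounds (K := K) hr s).2])
      rwa [integral_const, probReal_univ, one_smul] at this
    rw [integral_sub (integrable_call h₂ K) hphi2] at e2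
    rw [integral_sub (integrable_call h₁ K) hphi1] at e1
    linarith
  by_contra hcon
  push_neg at hcon
  set d : ℝ := (∫ s, max (s - K) 0 ∂μ₂) - ∫ s, max (s - K) 0 ∂μ₁ with hd
  have hdpos : 0 < d := by simp only [hd]; linarith
  have h6 := key (min (K / 2) (d / 2)) (lt_min (by positivity) (by positivity)) (min_le_left _ _)
  have h7 : min (K / 2) (d / 2) ≤ d / 2 := min_le_right _ _
  linarith

theorem tail_le_aux {S₀ : ℝ} {ν₁ ν₂ : Measure ℝ}
    (h₁ : IsMarginal S₀ ν₁) (h₂ : IsMarginal S₀ ν₂)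
    (hc : ∀ K : ℝ, 0 < K → (∫ s, max (s - K) 0 ∂ν₁) = ∫ s, max (s - K) 0 ∂ν₂)
    {K K' : ℝ} (hK : 0 < K) (hKK' : K < K') : ν₁ (Set.Ioi K') ≤ ν₂ (Set.Ioi K) := by
  haveI := h₁.prob
  haveI := h₂.prob
  have hg_lb : ∀ s, (Set.Ioi K').indicator (fun _ => K' - K) s
      ≤ max (s - K) 0 - max (s - K') 0 := by
    intro s
    by_cases hs : s ∈ Set.Ioi K'
    · rw [Set.indicator_of_mem hs]
      simp only [mem_Ioi] at hs
      rw [max_eq_left (by linarith : (0:ℝ) ≤ s - K), max_eq_left (by linarith : (0:ℝ) ≤ s - K')]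
      linarith
    · rw [Set.indicator_of_notMem hs]
      simp only [mem_Ioi, not_lt] at hs
      rw [max_eq_right (by linarith : s - K' ≤ 0), sub_zero]
      exact le_max_right _ _
  have hg_ub : ∀ s, max (s - K) 0 - max (s - K') 0
      ≤ (Set.Ioi K).indicator (fun _ => K' - K) s := by
    intro s
    by_cases hs : s ∈ Set.Ioi K
    · rw [Set.indicator_of_mem hs]
      simp only [mem_Ioi] at hs
      rcases le_total s K' with h' | h'
      · rw [max_eq_right (by linarith : s - K' ≤ 0), sub_zero]
        exact max_le (by linarith) (by linarith)
      · rw [max_eq_left (by linarith : (0:ℝ) ≤ s - K), max_eq_left (by linarith : (0:ℝ) ≤ s - K')]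
        linarith
    · rw [Set.indicator_of_notMem hs]
      simp only [mem_Ioi, not_lt] at hs
      rw [max_eq_right (by linarith : s - K ≤ 0)]
      have : (0:ℝ) ≤ max (s - K') 0 := le_max_right _ _
      linarith
  have hgint₁ : Integrable (fun s => max (s - K) 0 - max (s - K') 0) ν₁ :=
    (integrable_call h₁ K).sub (integrable_call h₁ K')
  have hgint₂ : Integrable (fun s => max (s - K) 0 - max (s - K') 0) ν₂ :=
    (integrable_call h₂ K).sub (integrable_call h₂ K')
  have hind₁ : Integrable ((Set.Ioi K').indicator fun _ => K' - K) ν₁ :=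
    (integrable_const (K' - K)).indicator measurableSet_Ioi
  have hind₂ : Integrable ((Set.Ioi K).indicator fun _ => K' - K) ν₂ :=
    (integrable_const (K' - K)).indicator measurableSet_Ioi
  have i1 : (ν₁ (Set.Ioi K')).toReal * (K' - K)
      ≤ ∫ s, (max (s - K) 0 - max (s - K') 0) ∂ν₁ := by
    have h7 := integral_mono hind₁ hgint₁ hg_lb
    rwa [integral_indicator measurableSet_Ioi, setIntegral_const, smul_eq_mul, measureReal_def] at h7
  have i2 : ∫ s, (max (s - K) 0 - max (s - K') 0) ∂ν₂
      ≤ (ν₂ (Set.Ioi K)).toReal * (K' - K) := by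
    have h7 := integral_mono hgint₂ hind₂ hg_ub
    rwa [integral_indicator measurableSet_Ioi, setIntegral_const, smul_eq_mul, measureReal_def] at h7
  have ieq : ∫ s, (max (s - K) 0 - max (s - K') 0) ∂ν₁
      = ∫ s, (max (s - K) 0 - max (s - K') 0) ∂ν₂ := by
    rw [integral_sub (integrable_call h₁ K) (integrable_call h₁ K'),
      integral_sub (integrable_call h₂ K) (integrable_call h₂ K'),
      hc K hK, hc K' (by linarith)]
  have htoReal : (ν₁ (Set.Ioi K')).toReal ≤ (ν₂ (Set.Ioi K)).toReal := by
    have hKK : (0:ℝ) < K' - K := by linarith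
    have := i1.trans (ieq.le.trans i2)
    exact le_of_mul_le_mul_right this hKK
  exact (ENNReal.toReal_le_toReal (measure_ne_top _ _) (measure_ne_top _ _)).mp htoReal

theorem tail_eq_aux {S₀ : ℝ} {ν₁ ν₂ : Measure ℝ}
    (h₁ : IsMarginal S₀ ν₁) (h₂ : IsMarginal S₀ ν₂)
    (hc : ∀ K : ℝ, 0 < K → (∫ s, max (s - K) 0 ∂ν₁) = ∫ s, max (s - K) 0 ∂ν₂)
    {K : ℝ} (hK : 0 < K) : ν₁ (Set.Ioi K) = ν₂ (Set.Ioi K) := by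
  have hsub : Set.Ioi K = ⋃ n : ℕ, Set.Ioi (K + 1 / (n + 1)) := by
    ext s
    simp only [mem_Ioi, mem_iUnion]
    constructor
    · intro hs
      obtain ⟨n, hn⟩ := exists_nat_one_div_lt (by linarith : (0:ℝ) < s - K)
      exact ⟨n, by linarith⟩
    · rintro ⟨n, hn⟩
      have : (0:ℝ) < 1 / ((n:ℝ) + 1) := by positivity
      linarith
  have hmono : Monotone (fun n : ℕ => Set.Ioi (K + 1 / ((n:ℝ) + 1))) := by
    intro m n hmn
    apply Ioi_subset_Ioi
    have h8 : ((m:ℝ) + 1) ≤ (n:ℝ) + 1 := by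
      have := (Nat.cast_le (α := ℝ)).mpr hmn; linarith
    have := one_div_le_one_div_of_le (by positivity : (0:ℝ) < (m:ℝ) + 1) h8
    linarith
  have hstep : ∀ (w₁ w₂ : Measure ℝ), IsMarginal S₀ w₁ → IsMarginal S₀ w₂ →
      (∀ K : ℝ, 0 < K → (∫ s, max (s - K) 0 ∂w₁) = ∫ s, max (s - K) 0 ∂w₂) →
      w₁ (Set.Ioi K) ≤ w₂ (Set.Ioi K) := by
    intro w₁ w₂ hw₁ hw₂ hcw
    have : w₁ (Set.Ioi K) = ⨆ n : ℕ, w₁ (Set.Ioi (K + 1 / ((n:ℝ) + 1))) := by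
      rw [hsub]
      exact hmono.directed_le.measure_iUnion
    rw [this]
    refine iSup_le fun n => ?_
    refine tail_le_aux hw₁ hw₂ hcw hK ?_
    have : (0:ℝ) < 1 / ((n:ℝ) + 1) := by positivity
    linarith
  exact le_antisymm (hstep ν₁ ν₂ h₁ h₂ hc) (hstep ν₂ ν₁ h₂ h₁ (fun K hK => (hc K hK).symm))

theorem measure_eq_of_calls_eq {S₀ : ℝ} {μ₁ μ₂ : Measure ℝ}
    (h₁ : IsMarginal S₀ μ₁) (h₂ : IsMarginal S₀ μ₂)
    (hc : ∀ K : ℝ, 0 < K → (∫ s, max (s - K) 0 ∂μ₁) = ∫ s, max (s - K) 0 ∂μ₂) :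
    μ₁ = μ₂ := by
  haveI := h₁.prob
  haveI := h₂.prob
  refine Measure.ext_of_Iic μ₁ μ₂ fun a => ?_
  rcases le_or_gt a 0 with ha | ha
  · have hsub : Set.Iic a ⊆ (Set.Ioi (0:ℝ))ᶜ := by
      intro s hs
      simp only [mem_compl_iff, mem_Ioi, not_lt]
      exact le_trans hs ha
    rw [measure_mono_null hsub h₁.conc, measure_mono_null hsub h₂.conc]
  · have e := tail_eq_aux h₁ h₂ hc ha
    have c1 : μ₁ (Set.Iic a) = μ₁ univ - μ₁ (Set.Ioi a) := by
      rw [← compl_Ioi, measure_compl measurableSet_Ioi (measure_ne_top _ _)]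
    have c2 : μ₂ (Set.Iic a) = μ₂ univ - μ₂ (Set.Ioi a) := by
      rw [← compl_Ioi, measure_compl measurableSet_Ioi (measure_ne_top _ _)]
    rw [c1, c2, e, measure_univ, measure_univ]

theorem ell_lt_of_ne {τ S₀ : ℝ} {μ₁ μ₂ : Measure ℝ} (hτ : 0 < τ)
    (h₁ : IsMarginal S₀ μ₁) (h₂ : IsMarginal S₀ μ₂) (hord : ConvexOrder μ₁ μ₂)
    (hne : μ₁ ≠ μ₂) : (∫ s, Lf τ s ∂μ₁) < ∫ s, Lf τ s ∂μ₂ := by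
  rcases lt_or_eq_of_le (ell_le hτ h₁ h₂ hord) with h | h
  · exact h
  · exact absurd (measure_eq_of_calls_eq h₁ h₂
      (fun K hK => call_eq_of_ell_eq hτ h₁ h₂ hord h hK)) hne


end VIXAux

/-- Sufficient conditions for `P_super < σ₁₂` when `μ₂` has compact support
`[s₂d, s₂u] ⊆ (0,∞)`: (i) `E¹[λ_b(S₁)] < σ₁₂`; (ii) `L(s₁d) - ℓ₁ > L(s₂d) - ℓ₂`
(in particular `s₁d = s₂d` and `μ₁ ≠ μ₂`); (iii) `μ₁` charges
`(s₂d, λ_{b,-}⁻¹(σ₁₂)) ∪ (λ_{b,+}⁻¹(σ₁₂), s₂u)` (in this case `σ₁₂ ≤ λ̄_b`). -/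
theorem compact_support_suboptimal (τ S₀ s₂d s₂u s₁d : ℝ) (hτ : 0 < τ)
    (h0 : 0 < s₂d) (hdu : s₂d < s₂u)
    (μ₁ μ₂ : Measure ℝ) (h₁ : IsMarginal S₀ μ₁) (h₂ : IsMarginal S₀ μ₂)
    (hord : ConvexOrder μ₁ μ₂)
    (hsupp₂ : μ₂ (Set.Icc s₂d s₂u)ᶜ = 0)
    (hmin₂ : ∀ δ : ℝ, 0 < δ → μ₂ (Set.Ico s₂d (s₂d + δ)) ≠ 0)
    (hmax₂ : ∀ δ : ℝ, 0 < δ → μ₂ (Set.Ioc (s₂u - δ) s₂u) ≠ 0)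
    (hmin₁ : μ₁ (Set.Iio s₁d) = 0)
    (hmin₁' : ∀ δ : ℝ, 0 < δ → μ₁ (Set.Ico s₁d (s₁d + δ)) ≠ 0)
    (ℓ₁ ℓ₂ σ : ℝ) (hℓ₁ : ℓ₁ = ∫ s, Lf τ s ∂μ₁) (hℓ₂ : ℓ₂ = ∫ s, Lf τ s ∂μ₂)
    (hσ : σ = Real.sqrt (ℓ₂ - ℓ₁)) :
    ((∫ s, lamb τ s₂d s₂u s ∂μ₁) < σ → PsuperE τ μ₁ μ₂ < (σ : EReal)) ∧
    (Lf τ s₂d - ℓ₂ < Lf τ s₁d - ℓ₁ → PsuperE τ μ₁ μ₂ < (σ : EReal)) ∧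
    (s₁d = s₂d → μ₁ ≠ μ₂ → PsuperE τ μ₁ μ₂ < (σ : EReal)) ∧
    (σ ≤ lamBar τ s₂d s₂u) ∧
    (∀ rlo rhi : ℝ, s₂d ≤ rlo → rlo ≤ rhi → rhi ≤ s₂u →
      lamb τ s₂d s₂u rlo = σ → lamb τ s₂d s₂u rhi = σ →
      (∀ s : ℝ, s₂d ≤ s → s ≤ s₂u → lamb τ s₂d s₂u s = σ → s = rlo ∨ s = rhi) →
      μ₁ (Set.Ioo s₂d rlo ∪ Set.Ioo rhi s₂u) ≠ 0 →
      PsuperE τ μ₁ μ₂ < (σ : EReal)) := by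
  refine ⟨?_, ?_, ?_, ?_, ?_⟩
  · intro hIσ
    exact VIXAux.cond_i hτ h0 hdu h₁ h₂ hsupp₂ hIσ
  · intro hyp
    rw [hℓ₁, hℓ₂] at hyp
    exact VIXAux.cond_ii hτ h0 hdu h₁ h₂ hord hsupp₂ hmin₁'
      (by rw [hσ, hℓ₁, hℓ₂]) hyp
  · intro hs hne
    have hlt := VIXAux.ell_lt_of_ne hτ h₁ h₂ hord hne
    refine VIXAux.cond_ii hτ h0 hdu h₁ h₂ hord hsupp₂ hmin₁'
      (by rw [hσ, hℓ₁, hℓ₂]) ?_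
    rw [hs]
    linarith
  · exact VIXAux.bullet4 hτ h0 hdu h₁ h₂ hord hsupp₂ (by rw [hσ, hℓ₁, hℓ₂])
  · intro rlo rhi hr1 hr2 hr3 hlo hhi huniq hμU
    exact VIXAux.cond_iii hτ h0 hdu h₁ h₂ hord hsupp₂ (by rw [hσ, hℓ₁, hℓ₂])
      rlo rhi hr1 hr2 hr3 hlo hhi huniq hμU
end
end
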